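/- arXiv:2306.01967 — 4 statements merged into one kernel-verified Lean document; each statement's English description precedes it below -/
import Mathlib

section
/- Fix positive integers J, k, f, an even integer p ≥ 2, and constants λ̄ > 0, ξ > 0, m̄ > 0. Suppose that for every T0 ∈ ℕ the following holds on some probability space: (i) there are deterministic vectors X_j ∈ ℝ^k and μ_j ∈ ℝ^f for j = 1, …, J+1, and deterministic vectors β_s ∈ ℝ^k, λ_s ∈ ℝ^f for s ∈ {1, …, T0, t} with t > T0, such that every entry of every λ_s is bounded in absolute value by λ̄ and the smallest eigenvalue of (1/T0)·∑_{s=1}^{T0} λ_s λ_sᵀ is at least ξ; (ii) the real random variables ε_{j,s} (j = 1, …, J+1, s ∈ {1, …, T0, t}) are mutually independent, E[ε_{j,s}] = 0, (1/T0)·∑_{s=1}^{T0} E|ε_{j,s}|^q ≤ m̄ for q ∈ {2, p}, and E|ε_{j,t}| < ∞; (iii) untreated potential outcomes are Y⁰_{j,s} = X_jᵀβ_s + μ_jᵀλ_s + ε_{j,s}; (iv) random weights W_2, …, W_{J+1} are measurable with respect to the σ-algebra generated by {ε_{j,s} : 1 ≤ j ≤ J+1, 1 ≤ s ≤ T0}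 and almost surely satisfy W_j ≥ 0, ∑_{j=2}^{J+1} W_j = 1, ∑_{j=2}^{J+1} W_j X_j = X_1, and ∑_{j=2}^{J+1} W_j Y⁰_{j,s} = Y⁰_{1,s} for all s ≤ T0. Then the bias of the synthetic control estimator vanishes asymptotically: E[ Y⁰_{1,t} − ∑_{j=2}^{J+1} W_j Y⁰_{j,t} ] → 0 as T0 → ∞. -/
open MeasureTheory ProbabilityTheory Finset Filter

set_option maxHeartbeats 1000000 in
/-- Asymptotic unbiasedness of the synthetic control estimator
(Theorem 1 of the paper, after Abadie–Diamond–Hainmueller 2010).  For each number of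
pretreatment periods `T0` we are given, on a probability space, an interactive fixed
effects model (unit `0` of `Fin (J+1)` is the treated unit and the controls are
`j.succ`) with bounded factors, the eigenvalue condition, mutually independent mean-zero
shocks with uniformly bounded normalised moments, and weights measurable with respect to
the pretreatment shocks that a.s. satisfy adding-up, non-negativity and exact
pretreatment fit.  Then the bias `E[Y⁰_{1,t} − ∑_j W_j Y⁰_{j,t}]` tends to `0` as
`T0 → ∞`. -/
theorem synthetic_control_asymptotically_unbiased
    (J k f p : ℕ) (hJ : 0 < J) (hk : 0 < k) (hf : 0 < f)
    (hp : Even p) (hp2 : 2 ≤ p)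
    (lamBar ξ mBar : ℝ) (hlam : 0 < lamBar) (hξ : 0 < ξ) (hm : 0 < mBar)
    (Ω : ℕ → Type*) [∀ T0, MeasurableSpace (Ω T0)]
    (P : ∀ T0, Measure (Ω T0)) (hP : ∀ T0, IsProbabilityMeasure (P T0))
    (t : ℕ → ℕ) (ht : ∀ T0, T0 < t T0)
    (X : ∀ T0 : ℕ, Fin (J + 1) → Fin k → ℝ) (μ : ∀ T0 : ℕ, Fin (J + 1) → Fin f → ℝ)
    (β : ℕ → ℕ → Fin k → ℝ) (lam : ℕ → ℕ → Fin f → ℝ)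
    (hlamBd : ∀ T0 s, (s ∈ Finset.Icc 1 T0 ∨ s = t T0) → ∀ i, |lam T0 s i| ≤ lamBar)
    (heig : ∀ T0 : ℕ, 0 < T0 → ∀ v : Fin f → ℝ,
      ξ * ∑ i, v i ^ 2 ≤
        (T0 : ℝ)⁻¹ * ∑ s ∈ Finset.Icc 1 T0, (∑ i, v i * lam T0 s i) ^ 2)
    (ε : ∀ T0 : ℕ, Fin (J + 1) → ℕ → Ω T0 → ℝ)
    (hεmeas : ∀ T0 j s, Measurable (ε T0 j s))
    (hindep : ∀ T0, iIndepFun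
      (fun js : Fin (J + 1) × {s : ℕ // s ∈ Finset.Icc 1 T0 ∨ s = t T0} =>
        ε T0 js.1 js.2.1) (P T0))
    (hmean : ∀ T0 j s, (s ∈ Finset.Icc 1 T0 ∨ s = t T0) → ∫ ω, ε T0 j s ω ∂P T0 = 0)
    (hmom : ∀ T0 : ℕ, 0 < T0 → ∀ (j : Fin (J + 1)), ∀ q ∈ ({2, p} : Finset ℕ),
      (∀ s ∈ Finset.Icc 1 T0, Integrable (fun ω => |ε T0 j s ω| ^ q) (P T0)) ∧
      (T0 : ℝ)⁻¹ * ∑ s ∈ Finset.Icc 1 T0, ∫ ω, |ε T0 j s ω| ^ q ∂P T0 ≤ mBar)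
    (hmomt : ∀ T0 j, Integrable (fun ω => |ε T0 j (t T0) ω|) (P T0))
    (Y0 : ∀ T0 : ℕ, Fin (J + 1) → ℕ → Ω T0 → ℝ)
    (hY0 : ∀ T0 j s ω,
      Y0 T0 j s ω = (∑ i, X T0 j i * β T0 s i) + (∑ i, μ T0 j i * lam T0 s i) + ε T0 j s ω)
    (W : ∀ T0 : ℕ, Fin J → Ω T0 → ℝ)
    (hWmeas : ∀ T0 j,
      Measurable[⨆ (j' : Fin (J + 1)) (s ∈ Finset.Icc 1 T0),
        MeasurableSpace.comap (ε T0 j' s) inferInstance] (W T0 j))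
    (hWfit : ∀ T0, ∀ᵐ ω ∂P T0,
      (∀ j, 0 ≤ W T0 j ω) ∧
      (∑ j, W T0 j ω) = 1 ∧
      (∀ i, ∑ j, W T0 j ω * X T0 j.succ i = X T0 0 i) ∧
      (∀ s ∈ Finset.Icc 1 T0, ∑ j, W T0 j ω * Y0 T0 j.succ s ω = Y0 T0 0 s ω)) :
    Tendsto
      (fun T0 : ℕ =>
        ∫ ω, (Y0 T0 0 (t T0) ω - ∑ j, W T0 j ω * Y0 T0 j.succ (t T0) ω) ∂P T0)
      atTop (nhds 0) := by
  classical
  set C : ℝ := (f : ℝ) * lamBar ^ 2 * J * Real.sqrt mBar / ξ with hCdef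
  have hC0 : 0 ≤ C := by positivity
  -- the key quantitative bound for every T0 ≥ 1
  have hkey : ∀ T0 : ℕ, 1 ≤ T0 →
      |∫ ω, (Y0 T0 0 (t T0) ω - ∑ j, W T0 j ω * Y0 T0 j.succ (t T0) ω) ∂P T0|
        ≤ C / Real.sqrt T0 := by
    intro T0 hT0
    haveI := hP T0
    have hT0pos : 0 < T0 := hT0
    have hT0R : (0:ℝ) < T0 := by exact_mod_cast hT0pos
    -- measurability of weights w.r.t. the ambient σ-algebra
    have hWm : ∀ j, Measurable (W T0 j) := by
      intro j
      refine (hWmeas T0 j).mono ?_ le_rfl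
      refine iSup_le fun j' => iSup_le fun s => iSup_le fun hs => ?_
      exact (hεmeas T0 j' s).comap_le
    -- basic integrability of shocks
    have hmom2 := fun j => (hmom T0 hT0pos j 2 (by simp)).1
    have hmom2' := fun j => (hmom T0 hT0pos j 2 (by simp)).2
    have hε2int : ∀ (j : Fin (J+1)) (s : ℕ), s ∈ Finset.Icc 1 T0 →
        Integrable (fun ω => (ε T0 j s ω)^2) (P T0) := by
      intro j s hs
      simpa [sq_abs] using hmom2 j s hs
    have hεint : ∀ (j : Fin (J+1)) (s : ℕ), s ∈ Finset.Icc 1 T0 →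
        Integrable (ε T0 j s) (P T0) := by
      intro j s hs
      refine ((hε2int j s hs).add (integrable_const 1)).mono'
        (hεmeas T0 j s).aestronglyMeasurable ?_
      filter_upwards with ω
      have h1 : |ε T0 j s ω| ≤ (ε T0 j s ω)^2 + 1 := by
        nlinarith [sq_nonneg (|ε T0 j s ω| - 1), sq_abs (ε T0 j s ω)]
      simpa [Real.norm_eq_abs] using h1
    have hεtint : ∀ j, Integrable (ε T0 j (t T0)) (P T0) := by
      intro j
      refine (hmomt T0 j).mono' (hεmeas T0 j (t T0)).aestronglyMeasurable ?_
      filter_upwards with ω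
      simp [Real.norm_eq_abs]
    -- weights are a.s. in [0,1]
    have hWbd : ∀ᵐ ω ∂P T0, ∀ j, 0 ≤ W T0 j ω ∧ W T0 j ω ≤ 1 := by
      filter_upwards [hWfit T0] with ω hω
      intro j
      refine ⟨hω.1 j, ?_⟩
      calc W T0 j ω ≤ ∑ j', W T0 j' ω :=
            Finset.single_le_sum (fun j' _ => hω.1 j') (Finset.mem_univ j)
        _ = 1 := hω.2.1
    have hWint : ∀ j, Integrable (W T0 j) (P T0) := by
      intro j
      refine (integrable_const (1:ℝ)).mono' (hWm j).aestronglyMeasurable ?_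
      filter_upwards [hWbd] with ω hω
      rw [Real.norm_eq_abs, abs_of_nonneg (hω j).1]
      exact (hω j).2
    have hWεint : ∀ (j : Fin J) (j' : Fin (J+1)) (s : ℕ),
        Integrable (ε T0 j' s) (P T0) →
        Integrable (fun ω => W T0 j ω * ε T0 j' s ω) (P T0) := by
      intro j j' s hint
      refine hint.abs.mono' ((hWm j).mul (hεmeas T0 j' s)).aestronglyMeasurable ?_
      filter_upwards [hWbd] with ω hω
      rw [Real.norm_eq_abs, abs_mul]
      exact mul_le_of_le_one_left (abs_nonneg _)
        (abs_le.mpr ⟨by linarith [(hω j).1], (hω j).2⟩)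
    -- the factor-loading discrepancy A and its expectation a
    set A : Fin f → Ω T0 → ℝ :=
      fun i ω => μ T0 0 i - ∑ j, W T0 j ω * μ T0 j.succ i with hAdef
    have hAint : ∀ i, Integrable (A i) (P T0) := by
      intro i
      exact (integrable_const _).sub
        (integrable_finset_sum _ fun j _ => (hWint j).mul_const _)
    set a : Fin f → ℝ := fun i => ∫ ω, A i ω ∂P T0 with hadef
    -- the pretreatment residual η
    set η : ℕ → Ω T0 → ℝ :=
      fun s ω => (∑ j, W T0 j ω * ε T0 j.succ s ω) - ε T0 0 s ω with hηdef
    have hηint : ∀ s ∈ Finset.Icc 1 T0, Integrable (η s) (P T0) := by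
      intro s hs
      exact (integrable_finset_sum _ fun j _ =>
        hWεint j j.succ s (hεint j.succ s hs)).sub (hεint 0 s hs)
    -- pointwise expansion lemma (valid on the a.s. event of hWfit)
    have hexp : ∀ (s : ℕ) (ω : Ω T0),
        (∀ i, ∑ j, W T0 j ω * X T0 j.succ i = X T0 0 i) →
        Y0 T0 0 s ω - ∑ j, W T0 j ω * Y0 T0 j.succ s ω
          = (∑ i, A i ω * lam T0 s i) - η s ω := by
      intro s ω hXfit
      simp only [hY0]
      have e1 : ∑ j, W T0 j ω * (∑ i, X T0 j.succ i * β T0 s i)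
          = ∑ i, X T0 0 i * β T0 s i := by
        simp_rw [Finset.mul_sum]
        rw [Finset.sum_comm]
        simp_rw [← mul_assoc, ← Finset.sum_mul, hXfit]
      have e2 : ∑ j, W T0 j ω * (∑ i, μ T0 j.succ i * lam T0 s i)
          = ∑ i, (∑ j, W T0 j ω * μ T0 j.succ i) * lam T0 s i := by
        simp_rw [Finset.mul_sum]
        rw [Finset.sum_comm]
        simp_rw [← mul_assoc, Finset.sum_mul]
      have e3 : ∑ j, W T0 j ω * ((∑ i, X T0 j.succ i * β T0 s i)
            + (∑ i, μ T0 j.succ i * lam T0 s i) + ε T0 j.succ s ω)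
          = (∑ i, X T0 0 i * β T0 s i)
            + (∑ i, (∑ j, W T0 j ω * μ T0 j.succ i) * lam T0 s i)
            + ∑ j, W T0 j ω * ε T0 j.succ s ω := by
        simp_rw [mul_add, Finset.sum_add_distrib]
        rw [e1, e2]
      rw [e3]
      have e4 : ∑ i, A i ω * lam T0 s i
          = (∑ i, μ T0 0 i * lam T0 s i)
            - ∑ i, (∑ j, W T0 j ω * μ T0 j.succ i) * lam T0 s i := by
        simp_rw [hAdef, sub_mul]
        exact Finset.sum_sub_distrib _ _
      rw [e4, hηdef]
      ring
    -- a.s. identity from exact pretreatment fit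
    have hfit : ∀ s ∈ Finset.Icc 1 T0, ∀ᵐ ω ∂P T0,
        ∑ i, A i ω * lam T0 s i = η s ω := by
      intro s hs
      filter_upwards [hWfit T0] with ω hω
      have h := hexp s ω hω.2.2.1
      have h2 := hω.2.2.2 s hs
      have h3 : Y0 T0 0 s ω - ∑ j, W T0 j ω * Y0 T0 j.succ s ω = 0 := by
        rw [h2]; ring
      rw [h3] at h
      linarith
    -- expectation of η
    have hEη : ∀ s ∈ Finset.Icc 1 T0,
        ∫ ω, η s ω ∂P T0 = ∑ i, a i * lam T0 s i := by
      intro s hs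
      rw [← integral_congr_ae (hfit s hs)]
      rw [integral_finset_sum _ (fun i _ => (hAint i).mul_const _)]
      simp_rw [integral_mul_const]
      rfl
    -- the vector b and the constant c
    set b : Fin f → ℝ :=
      fun i => ∑ s ∈ Finset.Icc 1 T0, lam T0 s i * ∫ ω, η s ω ∂P T0 with hbdef
    set c : ℝ := Real.sqrt (lamBar^2 * mBar * T0) with hcdef
    have hcpos : 0 < c := Real.sqrt_pos.mpr (by positivity)
    have hcsq : c^2 = lamBar^2 * mBar * T0 := Real.sq_sqrt (by positivity)
    -- products of shocks at distinct pretreatment times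
    have hpair : ∀ (j : Fin (J+1)) (s s' : ℕ), s ∈ Finset.Icc 1 T0 →
        s' ∈ Finset.Icc 1 T0 → s ≠ s' →
        Integrable (fun ω => ε T0 j s ω * ε T0 j s' ω) (P T0) ∧
        ∫ ω, ε T0 j s ω * ε T0 j s' ω ∂P T0 = 0 := by
      intro j s s' hs hs' hne
      have hind : IndepFun (ε T0 j s) (ε T0 j s') (P T0) := by
        have h := (hindep T0).indepFun
          (i := (j, ⟨s, Or.inl hs⟩)) (j := (j, ⟨s', Or.inl hs'⟩)) ?_
        · exact h
        · intro hcontra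
          exact hne (congrArg (fun q : Fin (J+1) ×
            {u : ℕ // u ∈ Finset.Icc 1 T0 ∨ u = t T0} => (q.2 : ℕ)) hcontra)
      refine ⟨hind.integrable_mul (hεint j s hs) (hεint j s' hs'), ?_⟩
      have hmul := hind.integral_mul_eq_mul_integral (hεmeas T0 j s).aestronglyMeasurable
        (hεmeas T0 j s').aestronglyMeasurable
      calc ∫ ω, ε T0 j s ω * ε T0 j s' ω ∂P T0
          = integral (P T0) (ε T0 j s * ε T0 j s') := rfl
        _ = 0 := by rw [hmul, hmean T0 j s (Or.inl hs), zero_mul]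
    -- the scaled sums Z and their second moments
    set Z : Fin (J+1) → Fin f → Ω T0 → ℝ :=
      fun j i ω => ∑ s ∈ Finset.Icc 1 T0, lam T0 s i * ε T0 j s ω with hZdef
    have hZint : ∀ j i, Integrable (Z j i) (P T0) := by
      intro j i
      exact integrable_finset_sum _ fun s hs => (hεint j s hs).const_mul _
    have hZmeas : ∀ j i, Measurable (Z j i) := by
      intro j i
      exact Finset.measurable_sum _ fun s _ => (hεmeas T0 j s).const_mul _
    have htermint : ∀ (j : Fin (J+1)) (i : Fin f), ∀ s ∈ Finset.Icc 1 T0,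
        ∀ s' ∈ Finset.Icc 1 T0,
        Integrable (fun ω => (lam T0 s i * lam T0 s' i)
          * (ε T0 j s ω * ε T0 j s' ω)) (P T0) := by
      intro j i s hs s' hs'
      by_cases hss : s = s'
      · subst hss
        have : (fun ω => (lam T0 s i * lam T0 s i) * (ε T0 j s ω * ε T0 j s ω))
            = fun ω => (lam T0 s i * lam T0 s i) * (ε T0 j s ω)^2 := by
          funext ω; ring
        rw [this]
        exact (hε2int j s hs).const_mul _
      · exact ((hpair j s s' hs hs' hss).1).const_mul _
    have hZsq : ∀ (j : Fin (J+1)) (i : Fin f),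
        Integrable (fun ω => (Z j i ω)^2) (P T0) ∧
        ∫ ω, (Z j i ω)^2 ∂P T0 ≤ lamBar^2 * mBar * T0 := by
      intro j i
      have hsqexp : (fun ω => (Z j i ω)^2)
          = fun ω => ∑ s ∈ Finset.Icc 1 T0, ∑ s' ∈ Finset.Icc 1 T0,
              (lam T0 s i * lam T0 s' i) * (ε T0 j s ω * ε T0 j s' ω) := by
        funext ω
        rw [hZdef, sq, Finset.sum_mul_sum]
        refine Finset.sum_congr rfl fun s _ => Finset.sum_congr rfl fun s' _ => by ring
      have hint : Integrable (fun ω => (Z j i ω)^2) (P T0) := by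
        rw [hsqexp]
        exact integrable_finset_sum _ fun s hs =>
          integrable_finset_sum _ fun s' hs' => htermint j i s hs s' hs'
      refine ⟨hint, ?_⟩
      have hval : ∫ ω, (Z j i ω)^2 ∂P T0
          = ∑ s ∈ Finset.Icc 1 T0, (lam T0 s i)^2 * ∫ ω, (ε T0 j s ω)^2 ∂P T0 := by
        rw [hsqexp, integral_finset_sum _ (fun s hs =>
          integrable_finset_sum _ fun s' hs' => htermint j i s hs s' hs')]
        refine Finset.sum_congr rfl fun s hs => ?_
        rw [integral_finset_sum _ (fun s' hs' => htermint j i s hs s' hs')]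
        rw [Finset.sum_eq_single_of_mem s hs]
        · have : (fun ω => (lam T0 s i * lam T0 s i) * (ε T0 j s ω * ε T0 j s ω))
              = fun ω => (lam T0 s i * lam T0 s i) * (ε T0 j s ω)^2 := by
            funext ω; ring
          rw [this, integral_const_mul, ← sq]
        · intro s' hs' hne
          rw [integral_const_mul, (hpair j s s' hs hs' (Ne.symm hne)).2, mul_zero]
      rw [hval]
      have hstep : ∀ s ∈ Finset.Icc 1 T0,
          (lam T0 s i)^2 * ∫ ω, (ε T0 j s ω)^2 ∂P T0
            ≤ lamBar^2 * ∫ ω, |ε T0 j s ω|^2 ∂P T0 := by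
        intro s hs
        have h1 : ∫ ω, (ε T0 j s ω)^2 ∂P T0 = ∫ ω, |ε T0 j s ω|^2 ∂P T0 := by
          refine integral_congr_ae (Eventually.of_forall fun ω => ?_)
          simp [sq_abs]
        rw [h1]
        have h2 : 0 ≤ ∫ ω, |ε T0 j s ω|^2 ∂P T0 :=
          integral_nonneg fun ω => by positivity
        have h3 : (lam T0 s i)^2 ≤ lamBar^2 := by
          have := hlamBd T0 s (Or.inl hs) i
          nlinarith [abs_nonneg (lam T0 s i), sq_abs (lam T0 s i)]
        exact mul_le_mul_of_nonneg_right h3 h2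
      calc ∑ s ∈ Finset.Icc 1 T0, (lam T0 s i)^2 * ∫ ω, (ε T0 j s ω)^2 ∂P T0
          ≤ ∑ s ∈ Finset.Icc 1 T0, lamBar^2 * ∫ ω, |ε T0 j s ω|^2 ∂P T0 :=
            Finset.sum_le_sum hstep
        _ = lamBar^2 * ∑ s ∈ Finset.Icc 1 T0, ∫ ω, |ε T0 j s ω|^2 ∂P T0 := by
            rw [Finset.mul_sum]
        _ ≤ lamBar^2 * (mBar * T0) := by
            refine mul_le_mul_of_nonneg_left ?_ (by positivity)
            have := hmom2' j
            rw [inv_mul_le_iff₀ hT0R] at this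
            linarith [this]
        _ = lamBar^2 * mBar * T0 := by ring
    -- first absolute moment of Z
    have hZabs : ∀ j i, ∫ ω, |Z j i ω| ∂P T0 ≤ c := by
      intro j i
      have h2 := hZsq j i
      have hpt : ∀ ω, |Z j i ω| ≤ (Z j i ω)^2 / (2*c) + c/2 := by
        intro ω
        rw [div_add_div _ _ (by positivity) (by norm_num), le_div_iff₀ (by positivity)]
        nlinarith [sq_nonneg (|Z j i ω| - c), sq_abs (Z j i ω), hcpos]
      calc ∫ ω, |Z j i ω| ∂P T0
          ≤ ∫ ω, ((Z j i ω)^2 / (2*c) + c/2) ∂P T0 := by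
            refine integral_mono (hZint j i).abs
              ((h2.1.div_const _).add (integrable_const _)) hpt
        _ = (∫ ω, (Z j i ω)^2 ∂P T0) / (2*c) + c/2 := by
            rw [integral_add (h2.1.div_const _) (integrable_const _),
              integral_div, integral_const]
            simp
        _ ≤ c^2 / (2*c) + c/2 := by
            have := h2.2
            rw [← hcsq] at this
            have h4 : (0:ℝ) < 2*c := by positivity
            gcongr
        _ = c := by field_simp; ring
    -- the value of b
    have hWZint : ∀ (j : Fin J) i,
        Integrable (fun ω => W T0 j ω * Z j.succ i ω) (P T0) := by
      intro j i
      refine (hZint j.succ i).abs.mono'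
        ((hWm j).mul (hZmeas j.succ i)).aestronglyMeasurable ?_
      filter_upwards [hWbd] with ω hω
      rw [Real.norm_eq_abs, abs_mul]
      exact mul_le_of_le_one_left (abs_nonneg _)
        (abs_le.mpr ⟨by linarith [(hω j).1], (hω j).2⟩)
    have hbval : ∀ i, b i = ∑ j : Fin J, ∫ ω, W T0 j ω * Z j.succ i ω ∂P T0 := by
      intro i
      have hpt : ∀ ω, ∑ s ∈ Finset.Icc 1 T0, lam T0 s i * η s ω
          = (∑ j : Fin J, W T0 j ω * Z j.succ i ω) - Z 0 i ω := by
        intro ω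
        simp only [hηdef, hZdef, mul_sub]
        rw [Finset.sum_sub_distrib]
        congr 1
        simp_rw [Finset.mul_sum]
        rw [Finset.sum_comm]
        exact Finset.sum_congr rfl fun j _ => Finset.sum_congr rfl fun s _ => by ring
      have h1 : b i = ∫ ω, ∑ s ∈ Finset.Icc 1 T0, lam T0 s i * η s ω ∂P T0 := by
        rw [integral_finset_sum _ (fun s hs => (hηint s hs).const_mul _)]
        simp_rw [integral_const_mul]
        rfl
      have hZ0 : ∫ ω, Z 0 i ω ∂P T0 = 0 := by
        rw [hZdef, integral_finset_sum _ (fun s hs => (hεint 0 s hs).const_mul _)]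
        refine Finset.sum_eq_zero fun s hs => ?_
        rw [integral_const_mul, hmean T0 0 s (Or.inl hs), mul_zero]
      rw [h1, integral_congr_ae (Eventually.of_forall hpt),
        integral_sub (integrable_finset_sum _ fun j _ => hWZint j i) (hZint 0 i),
        hZ0, sub_zero,
        integral_finset_sum _ (fun j _ => hWZint j i)]
    -- bound on b
    have hbbd : ∀ i, |b i| ≤ J * c := by
      intro i
      rw [hbval i]
      calc |∑ j : Fin J, ∫ ω, W T0 j ω * Z j.succ i ω ∂P T0|
          ≤ ∑ j : Fin J, |∫ ω, W T0 j ω * Z j.succ i ω ∂P T0| :=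
            Finset.abs_sum_le_sum_abs _ _
        _ ≤ ∑ _j : Fin J, c := by
            refine Finset.sum_le_sum fun j _ => ?_
            calc |∫ ω, W T0 j ω * Z j.succ i ω ∂P T0|
                ≤ ∫ ω, |W T0 j ω| * |Z j.succ i ω| ∂P T0 := by
                  simpa [Real.norm_eq_abs, abs_mul] using
                    norm_integral_le_integral_norm (fun ω => W T0 j ω * Z j.succ i ω) (μ := P T0)
              _ ≤ ∫ ω, |Z j.succ i ω| ∂P T0 := by
                  refine integral_mono_ae ?_ (hZint j.succ i).abs ?_
                  · simpa [abs_mul] using (hWZint j i).abs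
                  · filter_upwards [hWbd] with ω hω
                    exact mul_le_of_le_one_left (abs_nonneg _)
                      (abs_le.mpr ⟨by linarith [(hω j).1], (hω j).2⟩)
              _ ≤ c := hZabs j.succ i
        _ = J * c := by simp [Finset.sum_const, Finset.card_univ, nsmul_eq_mul]
    -- eigenvalue inequality applied to a
    have hquad : ξ * (T0:ℝ) * ∑ i, (a i)^2 ≤ ∑ i, a i * b i := by
      have h1 := heig T0 hT0pos a
      have hsum_id : ∑ s ∈ Finset.Icc 1 T0, (∑ i, a i * lam T0 s i)^2
          = ∑ i, a i * b i := by
        have hper : ∀ s ∈ Finset.Icc 1 T0, (∑ i, a i * lam T0 s i)^2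
            = ∑ i, a i * (lam T0 s i * ∫ ω, η s ω ∂P T0) := by
          intro s hs
          rw [sq]
          nth_rewrite 2 [← hEη s hs]
          rw [Finset.sum_mul]
          refine Finset.sum_congr rfl fun i _ => by ring
        rw [Finset.sum_congr rfl hper, Finset.sum_comm]
        refine Finset.sum_congr rfl fun i _ => ?_
        rw [← Finset.mul_sum]
      rw [hsum_id] at h1
      calc ξ * (T0:ℝ) * ∑ i, (a i)^2 = (T0:ℝ) * (ξ * ∑ i, (a i)^2) := by ring
        _ ≤ (T0:ℝ) * ((T0:ℝ)⁻¹ * ∑ i, a i * b i) := by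
            exact mul_le_mul_of_nonneg_left h1 (le_of_lt hT0R)
        _ = ∑ i, a i * b i := by field_simp
    -- bound on ∑ a², via Cauchy–Schwarz
    have hb2 : ∑ i, (b i)^2 ≤ (f:ℝ) * (J*c)^2 := by
      calc ∑ i, (b i)^2 ≤ ∑ _i : Fin f, (J*c)^2 := by
            refine Finset.sum_le_sum fun i _ => ?_
            have := hbbd i
            nlinarith [abs_nonneg (b i), sq_abs (b i)]
        _ = (f:ℝ) * (J*c)^2 := by simp [Finset.sum_const, Finset.card_univ, nsmul_eq_mul]
    have hS : ∑ i, (a i)^2 ≤ (f:ℝ) * (J*c)^2 / (ξ^2 * T0^2) := by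
      set S := ∑ i, (a i)^2 with hSdef
      have hS0 : 0 ≤ S := Finset.sum_nonneg fun i _ => sq_nonneg _
      have hcs : (∑ i, a i * b i)^2 ≤ S * ∑ i, (b i)^2 :=
        Finset.sum_mul_sq_le_sq_mul_sq _ _ _
      rcases eq_or_lt_of_le hS0 with h0 | hpos
      · rw [← h0]; positivity
      · have h4 : (ξ * (T0:ℝ) * S)^2 ≤ (∑ i, a i * b i)^2 :=
          pow_le_pow_left₀ (by positivity) hquad 2
        have h3 : (ξ * (T0:ℝ) * S)^2 ≤ S * ((f:ℝ) * (J*c)^2) :=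
          le_trans h4 (le_trans hcs (mul_le_mul_of_nonneg_left hb2 hS0))
        have h7 : (S * (ξ^2 * (T0:ℝ)^2)) * S ≤ ((f:ℝ) * (J*c)^2) * S := by
          linear_combination h3
        have h6 : S * (ξ^2 * (T0:ℝ)^2) ≤ (f:ℝ) * (J*c)^2 :=
          le_of_mul_le_mul_right h7 hpos
        rw [le_div_iff₀ (by positivity)]
        exact h6
    -- identify the bias with ∑ a·λ_t
    have hbias : ∫ ω, (Y0 T0 0 (t T0) ω - ∑ j, W T0 j ω * Y0 T0 j.succ (t T0) ω) ∂P T0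
        = ∑ i, a i * lam T0 (t T0) i := by
      have hae : ∀ᵐ ω ∂P T0,
          Y0 T0 0 (t T0) ω - ∑ j, W T0 j ω * Y0 T0 j.succ (t T0) ω
            = (∑ i, A i ω * lam T0 (t T0) i) - η (t T0) ω := by
        filter_upwards [hWfit T0] with ω hω
        exact hexp (t T0) ω hω.2.2.1
      have hηtint : Integrable (η (t T0)) (P T0) :=
        (integrable_finset_sum _ fun j _ =>
          hWεint j j.succ (t T0) (hεtint j.succ)).sub (hεtint 0)
      have hEηt : ∫ ω, η (t T0) ω ∂P T0 = 0 := by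
        rw [hηdef]
        simp only
        rw [integral_sub (integrable_finset_sum _ fun j _ =>
            hWεint j j.succ (t T0) (hεtint j.succ)) (hεtint 0),
          hmean T0 0 (t T0) (Or.inr rfl), sub_zero,
          integral_finset_sum _ (fun j _ => hWεint j j.succ (t T0) (hεtint j.succ))]
        refine Finset.sum_eq_zero fun j _ => ?_
        -- independence of W and the post-treatment shock
        have hIndep : IndepFun (W T0 j) (ε T0 j.succ (t T0)) (P T0) := by
          set mfam : Fin (J+1) × {s : ℕ // s ∈ Finset.Icc 1 T0 ∨ s = t T0} →
              MeasurableSpace (Ω T0) :=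
            fun js => MeasurableSpace.comap (ε T0 js.1 js.2.1) inferInstance with hmfam
          have hle : ∀ js, mfam js ≤ _ := fun js => (hεmeas T0 js.1 js.2.1).comap_le
          set Spre : Set (Fin (J+1) × {s : ℕ // s ∈ Finset.Icc 1 T0 ∨ s = t T0}) :=
            {js | (js.2 : ℕ) ∈ Finset.Icc 1 T0} with hSpre
          have h2 := indep_biSup_compl hle (hindep T0).iIndep Spre
          have h3 : MeasurableSpace.comap (ε T0 j.succ (t T0)) inferInstance
              ≤ ⨆ js ∈ Spreᶜ, mfam js := by
            refine le_trans ?_ (le_iSup _ (⟨j.succ, ⟨t T0, Or.inr rfl⟩⟩ :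
              Fin (J+1) × {s : ℕ // s ∈ Finset.Icc 1 T0 ∨ s = t T0}))
            have hnot : (⟨j.succ, ⟨t T0, Or.inr rfl⟩⟩ :
                Fin (J+1) × {s : ℕ // s ∈ Finset.Icc 1 T0 ∨ s = t T0}) ∈ Spreᶜ := by
              simp only [hSpre, Set.mem_compl_iff, Set.mem_setOf_eq, Finset.mem_Icc]
              intro hcon
              exact absurd hcon.2 (not_le.mpr (ht T0))
            simp [hnot, hmfam]
          have h4 : MeasurableSpace.comap (W T0 j) inferInstance
              ≤ ⨆ js ∈ Spre, mfam js := by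
            refine le_trans (hWmeas T0 j).comap_le ?_
            refine iSup_le fun j' => iSup_le fun s => iSup_le fun hs => ?_
            refine le_trans ?_ (le_iSup _ (⟨j', ⟨s, Or.inl hs⟩⟩ :
              Fin (J+1) × {s : ℕ // s ∈ Finset.Icc 1 T0 ∨ s = t T0}))
            have hmem : (⟨j', ⟨s, Or.inl hs⟩⟩ :
                Fin (J+1) × {s : ℕ // s ∈ Finset.Icc 1 T0 ∨ s = t T0}) ∈ Spre := hs
            simp [hmem, hmfam]
          exact indep_of_indep_of_le_left (indep_of_indep_of_le_right h2 h3) h4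
        have hmul := hIndep.integral_mul_eq_mul_integral (hWm j).aestronglyMeasurable
          (hεmeas T0 j.succ (t T0)).aestronglyMeasurable
        calc ∫ ω, W T0 j ω * ε T0 j.succ (t T0) ω ∂P T0
            = integral (P T0) (W T0 j * ε T0 j.succ (t T0)) := rfl
          _ = 0 := by rw [hmul, hmean T0 j.succ (t T0) (Or.inr rfl), mul_zero]
      rw [integral_congr_ae hae,
        integral_sub (integrable_finset_sum _ fun i _ => (hAint i).mul_const _) hηtint,
        hEηt, sub_zero,
        integral_finset_sum _ (fun i _ => (hAint i).mul_const _)]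
      simp_rw [integral_mul_const]
      rfl
    -- final numeric bound
    rw [hbias]
    have hlamt2 : ∑ i, (lam T0 (t T0) i)^2 ≤ (f:ℝ) * lamBar^2 := by
      calc ∑ i, (lam T0 (t T0) i)^2 ≤ ∑ _i : Fin f, lamBar^2 := by
            refine Finset.sum_le_sum fun i _ => ?_
            have := hlamBd T0 (t T0) (Or.inr rfl) i
            nlinarith [abs_nonneg (lam T0 (t T0) i), sq_abs (lam T0 (t T0) i)]
        _ = (f:ℝ) * lamBar^2 := by simp [Finset.sum_const, Finset.card_univ, nsmul_eq_mul]
    have hB2 : (∑ i, a i * lam T0 (t T0) i)^2 ≤ (C / Real.sqrt T0)^2 := by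
      have hcs : (∑ i, a i * lam T0 (t T0) i)^2
          ≤ (∑ i, (a i)^2) * ∑ i, (lam T0 (t T0) i)^2 :=
        Finset.sum_mul_sq_le_sq_mul_sq _ _ _
      have hS0 : 0 ≤ ∑ i, (a i)^2 := Finset.sum_nonneg fun i _ => sq_nonneg _
      have hrhs : (C / Real.sqrt T0)^2 = C^2 / T0 := by
        rw [div_pow, Real.sq_sqrt (le_of_lt hT0R)]
      rw [hrhs]
      have hCsq : C^2 = (f:ℝ)^2 * lamBar^4 * J^2 * mBar / ξ^2 := by
        rw [hCdef, div_pow]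
        rw [mul_pow, mul_pow, Real.sq_sqrt (le_of_lt hm)]
        ring
      have hc2 : (J*c)^2 = J^2 * (lamBar^2 * mBar * T0) := by
        rw [mul_pow, hcsq]
      have hchain : (∑ i, a i * lam T0 (t T0) i)^2
          ≤ ((f:ℝ) * (J*c)^2 / (ξ^2 * T0^2)) * ((f:ℝ) * lamBar^2) := by
        calc (∑ i, a i * lam T0 (t T0) i)^2
            ≤ (∑ i, (a i)^2) * ∑ i, (lam T0 (t T0) i)^2 := hcs
          _ ≤ ((f:ℝ) * (J*c)^2 / (ξ^2 * T0^2)) * ((f:ℝ) * lamBar^2) := by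
              have hlam0 : 0 ≤ ∑ i, (lam T0 (t T0) i)^2 :=
                Finset.sum_nonneg fun i _ => sq_nonneg _
              exact mul_le_mul hS hlamt2 hlam0 (by positivity)
      refine le_trans hchain (le_of_eq ?_)
      rw [hc2, hCsq]
      field_simp
    calc |∑ i, a i * lam T0 (t T0) i|
        = Real.sqrt ((∑ i, a i * lam T0 (t T0) i)^2) := (Real.sqrt_sq_eq_abs _).symm
      _ ≤ Real.sqrt ((C / Real.sqrt T0)^2) := Real.sqrt_le_sqrt hB2
      _ = C / Real.sqrt T0 := Real.sqrt_sq (by positivity)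
  -- conclude by squeezing
  have hlim : Tendsto (fun T0 : ℕ => C / Real.sqrt T0) atTop (nhds 0) := by
    apply Tendsto.div_atTop (tendsto_const_nhds)
    have hs : Tendsto Real.sqrt atTop atTop := by
      refine tendsto_atTop_atTop.mpr fun bb => ⟨(max bb 0)^2, fun x hx => ?_⟩
      calc bb ≤ max bb 0 := le_max_left _ _
        _ = Real.sqrt ((max bb 0)^2) := (Real.sqrt_sq (le_max_right _ _)).symm
        _ ≤ Real.sqrt x := Real.sqrt_le_sqrt hx
    exact hs.comp tendsto_natCast_atTop_atTop
  refine squeeze_zero_norm' ?_ hlim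
  filter_upwards [eventually_ge_atTop 1] with T0 hT0
  simpa [Real.norm_eq_abs] using hkey T0 hT0
end

section
/- Fix positive integers J, T0, k, f, an even integer p ≥ 2, a post-treatment index t > T0, and constants λ̄ > 0, ξ > 0. Suppose on a probability space: (i) deterministic vectors X_j ∈ ℝ^k, μ_j ∈ ℝ^f (j = 1, …, J+1) and β_s ∈ ℝ^k, λ_s ∈ ℝ^f (s ∈ {1, …, T0, t}) are given, every entry of every λ_s is bounded in absolute value by λ̄, and the smallest eigenvalue of (1/T0)·∑_{s=1}^{T0} λ_s λ_sᵀ is at least ξ; (ii) the real random variables ε_{j,s} are mutually independent across (j, s), E[ε_{j,s}] = 0, E|ε_{j,s}|^p < ∞, and E|ε_{j,t}| < ∞; (iii) Y⁰_{j,s} = X_jᵀβ_s + μ_jᵀλ_s + ε_{j,s}; (iv) random weights W_2, …, W_{J+1} are measurable with respect to the σ-algebra generated by the pretreatment shocks {ε_{j,s} : s ≤ T0} and almost surely satisfy W_j ≥ 0, ∑_j W_j = 1, ∑_j W_j X_j = X_1, and ∑_j W_j Y⁰_{j,s} = Y⁰_{1,s} for all s ≤ T0. Define m̄_q = max_{j}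 (1/T0)·∑_{s=1}^{T0} E|ε_{j,s}|^q for q ∈ {2, p}. Then |E[ Y⁰_{1,t} − ∑_{j=2}^{J+1} W_j Y⁰_{j,t} ]| ≤ J · C(p)^{1/p} · (λ̄² f / ξ) · max{ m̄_p^{1/p} / T0^{1−1/p}, m̄_2^{1/2} / T0^{1/2} }. -/
open MeasureTheory ProbabilityTheory Finset

noncomputable def poissonRosenthalConst (p : ℕ) : ℝ :=
  ∑' n : ℕ, (Real.exp (-1) / (n.factorial : ℝ)) * ((n : ℝ) - 1) ^ p

lemma two_pow_le_two_mul_factorial (n : ℕ) : (2:ℕ)^n ≤ 2 * n.factorial := by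
  induction n with
  | zero => norm_num
  | succ n ih =>
    rcases Nat.eq_zero_or_pos n with h | h
    · subst h; norm_num [Nat.factorial]
    · have h2 : 2 * n.factorial ≤ (n+1) * n.factorial := Nat.mul_le_mul_right _ (by omega)
      calc 2^(n+1) = 2^n * 2 := pow_succ _ _
      _ ≤ 2*n.factorial*2 := Nat.mul_le_mul_right _ ih
      _ = 2*(2*n.factorial) := by ring
      _ ≤ 2*((n+1)*n.factorial) := Nat.mul_le_mul_left _ h2
      _ = 2*(n+1).factorial := by rw [Nat.factorial_succ]

lemma summable_nat_pow_div_factorial (q : ℕ) :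
    Summable (fun n : ℕ => (n:ℝ)^q / n.factorial) := by
  have hg : Summable (fun n : ℕ => (2:ℝ) * ((n:ℝ)^q * (1/2:ℝ)^n)) :=
    (summable_pow_mul_geometric_of_norm_lt_one q (r := (1/2:ℝ)) (by norm_num)).mul_left 2
  refine Summable.of_nonneg_of_le (fun n => by positivity) (fun n => ?_) hg
  have hfac : (2:ℝ)^n ≤ 2 * n.factorial := by
    exact_mod_cast two_pow_le_two_mul_factorial n
  have hfacpos : (0:ℝ) < n.factorial := by exact_mod_cast n.factorial_pos
  rw [div_le_iff₀ hfacpos]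
  have : (2:ℝ) * ((n:ℝ)^q * (1/2)^n) * n.factorial
      = (n:ℝ)^q * ((2 * n.factorial) * (1/2)^n) := by ring
  rw [this]
  nth_rewrite 1 [show ((n:ℝ)^q) = (n:ℝ)^q * 1 by ring]
  refine mul_le_mul_of_nonneg_left ?_ (by positivity)
  have h2 : (1:ℝ) ≤ (2 * n.factorial) * (1/2)^n := by
    rw [one_div, inv_pow, ← div_eq_mul_inv, le_div_iff₀ (by positivity)]
    simpa using hfac
  linarith

lemma summable_exp_div_factorial : Summable (fun n : ℕ => (1:ℝ) / n.factorial) := by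
  simpa using summable_nat_pow_div_factorial 0

lemma tsum_one_div_factorial : ∑' n : ℕ, (1:ℝ) / n.factorial = Real.exp 1 := by
  rw [Real.exp_eq_exp_ℝ, NormedSpace.exp_eq_tsum_div]
  simp

lemma summable_n_div_factorial : Summable (fun n : ℕ => (n:ℝ) / n.factorial) := by
  simpa using summable_nat_pow_div_factorial 1

lemma summable_n2_div_factorial : Summable (fun n : ℕ => (n:ℝ)^2 / n.factorial) :=
  summable_nat_pow_div_factorial 2

lemma tsum_n_div_factorial : ∑' n : ℕ, (n:ℝ) / n.factorial = Real.exp 1 := by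
  rw [Summable.tsum_eq_zero_add summable_n_div_factorial]
  have : ∀ n : ℕ, ((n:ℝ)+1) / ((n+1).factorial) = 1 / n.factorial := by
    intro n
    rw [Nat.factorial_succ]
    push_cast
    rw [div_eq_div_iff (by positivity) (by positivity)]
    ring
  simp only [Nat.cast_succ]
  rw [tsum_congr this, tsum_one_div_factorial]
  simp

lemma tsum_n2_div_factorial : ∑' n : ℕ, (n:ℝ)^2 / n.factorial = 2 * Real.exp 1 := by
  rw [Summable.tsum_eq_zero_add summable_n2_div_factorial]
  have : ∀ n : ℕ, (((n:ℕ)+1:ℕ):ℝ)^2 / ((n+1).factorial) = (n:ℝ) / n.factorial + 1 / n.factorial := by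
    intro n
    rw [Nat.factorial_succ, ← add_div]
    push_cast
    rw [div_eq_div_iff (by positivity) (by positivity)]
    ring
  push_cast
  rw [tsum_congr (fun n => by exact_mod_cast this n),
    Summable.tsum_add summable_n_div_factorial summable_exp_div_factorial,
    tsum_n_div_factorial, tsum_one_div_factorial]
  norm_num
  ring

lemma summable_sub_one_sq_div_factorial :
    Summable (fun n : ℕ => ((n:ℝ)-1)^2 / n.factorial) := by
  have : ∀ n : ℕ, ((n:ℝ)-1)^2 / n.factorial
      = (n:ℝ)^2 / n.factorial - 2 * ((n:ℝ)/n.factorial) + 1/n.factorial := by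
    intro n; field_simp; ring
  rw [funext this]
  exact ((summable_n2_div_factorial.sub
    (summable_n_div_factorial.mul_left 2)).add summable_exp_div_factorial)

lemma tsum_sub_one_sq_div_factorial :
    ∑' n : ℕ, ((n:ℝ)-1)^2 / n.factorial = Real.exp 1 := by
  have : ∀ n : ℕ, ((n:ℝ)-1)^2 / n.factorial
      = (n:ℝ)^2 / n.factorial - 2 * ((n:ℝ)/n.factorial) + 1/n.factorial := by
    intro n; field_simp; ring
  rw [tsum_congr this,
    Summable.tsum_add (summable_n2_div_factorial.sub (summable_n_div_factorial.mul_left 2))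
      summable_exp_div_factorial,
    Summable.tsum_sub summable_n2_div_factorial (summable_n_div_factorial.mul_left 2),
    tsum_mul_left, tsum_n_div_factorial, tsum_n2_div_factorial, tsum_one_div_factorial]
  ring

lemma sub_one_sq_le_pow {n : ℕ} {p : ℕ} (hp : Even p) (hp2 : 2 ≤ p) :
    ((n:ℝ)-1)^2 ≤ ((n:ℝ)-1)^p := by
  match n with
  | 0 => simp [hp.neg_one_pow]
  | 1 => norm_num
  | (m+2) =>
    have h1 : (1:ℝ) ≤ ((m+2:ℕ):ℝ) - 1 := by push_cast; linarith [Nat.cast_nonneg (α := ℝ) m]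
    exact pow_le_pow_right₀ h1 hp2

lemma summable_poisson_term {p : ℕ} (hp : Even p) :
    Summable (fun n : ℕ => Real.exp (-1) / (n.factorial : ℝ) * ((n:ℝ)-1)^p) := by
  have hle : ∀ n : ℕ, Real.exp (-1) / (n.factorial : ℝ) * ((n:ℝ)-1)^p
      ≤ Real.exp (-1) * ((n:ℝ)^p / n.factorial + 1 / n.factorial) := by
    intro n
    have h1 : ((n:ℝ)-1)^p ≤ (n:ℝ)^p + 1 := by
      rcases Nat.eq_zero_or_pos n with h | h
      · subst h
        simp only [Nat.cast_zero, zero_sub, hp.neg_one_pow]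
        norm_num
      · have h0 : (0:ℝ) ≤ (n:ℝ) - 1 := by
          have : (1:ℝ) ≤ (n:ℝ) := by exact_mod_cast h
          linarith
        have : ((n:ℝ)-1)^p ≤ (n:ℝ)^p :=
          pow_le_pow_left₀ h0 (by linarith) p
        linarith
    have hfac : (0:ℝ) < n.factorial := by exact_mod_cast n.factorial_pos
    rw [div_mul_eq_mul_div, mul_comm, ← div_mul_eq_mul_div]
    calc ((n:ℝ)-1)^p / n.factorial * Real.exp (-1)
        ≤ ((n:ℝ)^p + 1) / n.factorial * Real.exp (-1) := by
          exact mul_le_mul_of_nonneg_right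
            (div_le_div_of_nonneg_right h1 hfac.le |>.trans_eq rfl) (Real.exp_nonneg _)
      _ = Real.exp (-1) * ((n:ℝ)^p / n.factorial + 1 / n.factorial) := by
          rw [add_div]; ring
  have hnonneg : ∀ n : ℕ, 0 ≤ Real.exp (-1) / (n.factorial : ℝ) * ((n:ℝ)-1)^p := by
    intro n
    have := hp.pow_nonneg ((n:ℝ)-1)
    positivity
  exact Summable.of_nonneg_of_le hnonneg hle
    (((summable_nat_pow_div_factorial p).add summable_exp_div_factorial).mul_left _)

lemma one_le_poissonRosenthalConst {p : ℕ} (hp : Even p) (hp2 : 2 ≤ p) :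
    1 ≤ poissonRosenthalConst p := by
  have hval : ∑' n : ℕ, Real.exp (-1) / (n.factorial : ℝ) * ((n:ℝ)-1)^2 = 1 := by
    have : ∀ n : ℕ, Real.exp (-1) / (n.factorial : ℝ) * ((n:ℝ)-1)^2
        = Real.exp (-1) * (((n:ℝ)-1)^2 / n.factorial) := by intro n; ring
    rw [tsum_congr this, tsum_mul_left, tsum_sub_one_sq_div_factorial,
      ← Real.exp_add]
    norm_num
  rw [poissonRosenthalConst]
  calc (1:ℝ) = ∑' n : ℕ, Real.exp (-1) / (n.factorial : ℝ) * ((n:ℝ)-1)^2 := hval.symm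
  _ ≤ ∑' n : ℕ, Real.exp (-1) / (n.factorial : ℝ) * ((n:ℝ)-1)^p := by
      refine Summable.tsum_le_tsum (fun n => ?_)
        (by simpa using summable_poisson_term (p := 2) even_two) (summable_poisson_term hp)
      exact mul_le_mul_of_nonneg_left (sub_one_sq_le_pow hp hp2) (by positivity)

lemma poissonRosenthalConst_rpow_ge_one {p : ℕ} (hp : Even p) (hp2 : 2 ≤ p) :
    1 ≤ poissonRosenthalConst p ^ ((1:ℝ)/p) :=
  Real.one_le_rpow (one_le_poissonRosenthalConst hp hp2) (by positivity)

section Aux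
variable {Ω : Type*} [MeasurableSpace Ω] {P : Measure Ω} [IsProbabilityMeasure P]

lemma sq_le_one_add_pow {x : ℝ} (hx : 0 ≤ x) {p : ℕ} (hp2 : 2 ≤ p) : x^2 ≤ 1 + x^p := by
  rcases le_total x 1 with h | h
  · have h1 : x^2 ≤ 1 := pow_le_one₀ hx h
    have h2 : (0:ℝ) ≤ x^p := by positivity
    linarith
  · have : x^2 ≤ x^p := pow_le_pow_right₀ h hp2
    linarith

lemma integrable_sq_of_abs_pow {e : Ω → ℝ} (hm : Measurable e) {p : ℕ} (hp2 : 2 ≤ p)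
    (hi : Integrable (fun ω => |e ω|^p) P) : Integrable (fun ω => e ω^2) P := by
  refine Integrable.mono' ((integrable_const (1:ℝ)).add hi)
    ((hm.pow_const 2).aestronglyMeasurable) (Filter.Eventually.of_forall fun ω => ?_)
  have h := sq_le_one_add_pow (abs_nonneg (e ω)) hp2
  rw [Real.norm_eq_abs, abs_pow, ← sq_abs]
  simpa using h

lemma integrable_of_sq {e : Ω → ℝ} (hm : Measurable e)
    (hi : Integrable (fun ω => e ω^2) P) : Integrable e P := by
  refine Integrable.mono' ((integrable_const (1:ℝ)).add hi)
    hm.aestronglyMeasurable (Filter.Eventually.of_forall fun ω => ?_)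
  simp only [Pi.add_apply, Real.norm_eq_abs]
  nlinarith [sq_nonneg (|e ω| - 1), sq_abs (e ω), abs_nonneg (e ω)]

lemma sq_integral_le {h G : Ω → ℝ} (hm : Measurable h) (hpos : 0 ≤ h)
    (hG : Integrable G P) (hle : ∀ᵐ ω ∂P, h ω^2 ≤ G ω) :
    (∫ ω, h ω ∂P)^2 ≤ ∫ ω, G ω ∂P := by
  have h2i : Integrable (fun ω => h ω^2) P := by
    refine Integrable.mono' hG ((hm.pow_const 2).aestronglyMeasurable) ?_
    filter_upwards [hle] with ω hω
    rw [Real.norm_eq_abs, abs_of_nonneg (sq_nonneg _)]; exact hω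
  have hi : Integrable h P := integrable_of_sq hm h2i
  set c := ∫ ω, h ω ∂P with hc
  have e2 : ∫ ω, (h ω - c)^2 ∂P = (∫ ω, h ω^2 ∂P) - c^2 := by
    have hfun : (fun ω => (h ω - c)^2) = fun ω => (h ω^2 - (2*c)*h ω) + c^2 := by
      funext ω; ring
    have hsub : Integrable (fun ω => h ω^2 - (2*c)*h ω) P := h2i.sub (hi.const_mul (2*c))
    have hcm : Integrable (fun ω => (2*c)*h ω) P := hi.const_mul (2*c)
    rw [hfun, integral_add hsub (integrable_const _),
      integral_sub h2i hcm, integral_const_mul, integral_const]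
    simp [← hc]
    ring
  have e1 : 0 ≤ ∫ ω, (h ω - c)^2 ∂P := integral_nonneg fun ω => sq_nonneg _
  have e3 : ∫ ω, h ω^2 ∂P ≤ ∫ ω, G ω ∂P := integral_mono_ae h2i hG hle
  linarith [e2 ▸ e1]

lemma sum_sq_le_sq_sum {n : ℕ} (x : Fin n → ℝ) (hx : ∀ i, 0 ≤ x i) :
    ∑ i, x i ^ 2 ≤ (∑ i, x i)^2 := by
  have h1 : ∀ i ∈ Finset.univ (α := Fin n), x i ^2 ≤ x i * ∑ j, x j := by
    intro i _
    rw [sq]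
    exact mul_le_mul_of_nonneg_left
      (Finset.single_le_sum (fun j _ => hx j) (Finset.mem_univ i)) (hx i)
  calc ∑ i, x i^2 ≤ ∑ i, x i * ∑ j, x j := Finset.sum_le_sum h1
  _ = (∑ i, x i)^2 := by rw [← Finset.sum_mul, sq]

lemma integral_sq_sum {S : Finset ℕ} {c : ℕ → ℝ} {ζ : ℕ → Ω → ℝ}
    (hmeas : ∀ s ∈ S, Measurable (ζ s))
    (hint2 : ∀ s ∈ S, Integrable (fun ω => ζ s ω^2) P)
    (hmean : ∀ s ∈ S, ∫ ω, ζ s ω ∂P = 0)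
    (hindep : ∀ s ∈ S, ∀ s' ∈ S, s ≠ s' → IndepFun (ζ s) (ζ s') P) :
    Integrable (fun ω => (∑ s ∈ S, c s * ζ s ω)^2) P ∧
    ∫ ω, (∑ s ∈ S, c s * ζ s ω)^2 ∂P = ∑ s ∈ S, (c s)^2 * ∫ ω, ζ s ω^2 ∂P := by
  have hint : ∀ s ∈ S, Integrable (ζ s) P := fun s hs =>
    integrable_of_sq (hmeas s hs) (hint2 s hs)
  have hprod : ∀ s ∈ S, ∀ s' ∈ S, Integrable (fun ω => ζ s ω * ζ s' ω) P := by
    intro s hs s' hs'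
    refine Integrable.mono' (((hint2 s hs).add (hint2 s' hs')).const_mul (1/2:ℝ))
      ((hmeas s hs).mul (hmeas s' hs')).aestronglyMeasurable
      (Filter.Eventually.of_forall fun ω => ?_)
    simp only [Pi.add_apply]
    rw [Real.norm_eq_abs, abs_mul]
    nlinarith [sq_nonneg (|ζ s ω| - |ζ s' ω|), sq_abs (ζ s ω), sq_abs (ζ s' ω),
      abs_nonneg (ζ s ω), abs_nonneg (ζ s' ω)]
  have hexp : ∀ ω, (∑ s ∈ S, c s * ζ s ω)^2
      = ∑ s ∈ S, ∑ s' ∈ S, (c s * c s') * (ζ s ω * ζ s' ω) := by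
    intro ω
    rw [sq, Finset.sum_mul_sum]
    exact Finset.sum_congr rfl fun s _ => Finset.sum_congr rfl fun s' _ => by ring
  have hint_all : Integrable (fun ω => ∑ s ∈ S, ∑ s' ∈ S, (c s * c s') * (ζ s ω * ζ s' ω)) P :=
    integrable_finset_sum _ fun s hs => integrable_finset_sum _ fun s' hs' =>
      ((hprod s hs s' hs').const_mul _)
  constructor
  · exact hint_all.congr (Filter.Eventually.of_forall fun ω => (hexp ω).symm)
  · rw [show (fun ω => (∑ s ∈ S, c s * ζ s ω)^2)
        = fun ω => ∑ s ∈ S, ∑ s' ∈ S, (c s * c s') * (ζ s ω * ζ s' ω) from funext hexp]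
    rw [integral_finset_sum _ fun s hs => integrable_finset_sum _ fun s' hs' =>
      ((hprod s hs s' hs').const_mul _)]
    refine Finset.sum_congr rfl fun s hs => ?_
    rw [integral_finset_sum _ fun s' hs' => ((hprod s hs s' hs').const_mul _)]
    rw [Finset.sum_eq_single_of_mem s hs]
    · rw [integral_const_mul]
      have hfn : (fun a => ζ s a * ζ s a) = fun a => ζ s a^2 := funext fun a => (sq _).symm
      rw [hfn]; ring
    · intro s' hs' hne
      have h0 : (∫ a, ζ s a * ζ s' a ∂P) = (∫ a, ζ s a ∂P) * ∫ a, ζ s' a ∂P :=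
        (hindep s hs s' hs' (fun h => hne h.symm)).integral_mul_eq_mul_integral
          (hint s hs).1 (hint s' hs').1
      rw [integral_const_mul, h0, hmean s hs]
      ring

lemma pointwise_bound {f : ℕ} {ξ lamBar : ℝ} (hξ : 0 < ξ) (hlam : 0 ≤ lamBar)
    (v gv lamt : Fin f → ℝ) (hlamt : ∀ i, |lamt i| ≤ lamBar)
    (hkey : ξ * ∑ i, (v i)^2 ≤ ∑ i, v i * gv i) :
    |∑ i, v i * lamt i| ≤ lamBar * Real.sqrt f / ξ * Real.sqrt (∑ i, (gv i)^2) := by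
  set Sv := ∑ i, (v i)^2 with hSv
  set Sg := ∑ i, (gv i)^2 with hSg
  have hSv0 : 0 ≤ Sv := Finset.sum_nonneg fun i _ => sq_nonneg _
  have hSg0 : 0 ≤ Sg := Finset.sum_nonneg fun i _ => sq_nonneg _
  have h1 : |∑ i, v i * lamt i| ≤ lamBar * Real.sqrt f * Real.sqrt Sv := by
    calc |∑ i, v i * lamt i| ≤ ∑ i, |v i * lamt i| := Finset.abs_sum_le_sum_abs _ _
    _ ≤ ∑ i, |v i| * lamBar := Finset.sum_le_sum fun i _ => by
        rw [abs_mul]; exact mul_le_mul_of_nonneg_left (hlamt i) (abs_nonneg _)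
    _ = (∑ i, |v i|) * lamBar := by rw [Finset.sum_mul]
    _ ≤ Real.sqrt ((f:ℝ) * Sv) * lamBar := by
        refine mul_le_mul_of_nonneg_right ?_ hlam
        rw [show (∑ i, |v i|) = Real.sqrt ((∑ i, |v i|)^2) from
          (Real.sqrt_sq (Finset.sum_nonneg fun i _ => abs_nonneg _)).symm]
        apply Real.sqrt_le_sqrt
        calc (∑ i, |v i|)^2 ≤ (Finset.univ.card (α := Fin f) : ℝ) * ∑ i, |v i|^2 :=
              sq_sum_le_card_mul_sum_sq
        _ = (f:ℝ) * Sv := by simp [sq_abs, Finset.card_univ, hSv]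
    _ = lamBar * Real.sqrt f * Real.sqrt Sv := by
        rw [Real.sqrt_mul (by positivity)]; ring
  have h2 : Real.sqrt Sv ≤ Real.sqrt Sg / ξ := by
    rcases eq_or_lt_of_le hSv0 with h0 | h0
    · rw [← h0]
      simp only [Real.sqrt_zero]
      positivity
    · have hcs : (∑ i, v i * gv i) ≤ Real.sqrt Sv * Real.sqrt Sg := by
        calc ∑ i, v i * gv i ≤ |∑ i, v i * gv i| := le_abs_self _
        _ = Real.sqrt ((∑ i, v i * gv i)^2) := (Real.sqrt_sq_eq_abs _).symm
        _ ≤ Real.sqrt (Sv * Sg) :=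
            Real.sqrt_le_sqrt (Finset.sum_mul_sq_le_sq_mul_sq Finset.univ v gv)
        _ = _ := Real.sqrt_mul hSv0 _
      have hv : 0 < Real.sqrt Sv := Real.sqrt_pos.mpr h0
      rw [le_div_iff₀ hξ]
      have hSv_eq : Real.sqrt Sv * Real.sqrt Sv = Sv := Real.mul_self_sqrt hSv0
      nlinarith [hkey.trans hcs]
  calc |∑ i, v i * lamt i| ≤ lamBar * Real.sqrt f * Real.sqrt Sv := h1
  _ ≤ lamBar * Real.sqrt f * (Real.sqrt Sg / ξ) :=
      mul_le_mul_of_nonneg_left h2 (by positivity)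
  _ = lamBar * Real.sqrt f / ξ * Real.sqrt Sg := by ring

end Aux

section Algebra

lemma combo_eq {J k f : ℕ} (w : Fin J → ℝ) (X : Fin (J+1) → Fin k → ℝ)
    (μ : Fin (J+1) → Fin f → ℝ) (βs : Fin k → ℝ) (lams : Fin f → ℝ) (e : Fin (J+1) → ℝ)
    (h1 : ∑ j, w j = 1) (hX : ∀ i, ∑ j, w j * X j.succ i = X 0 i) :
    ((∑ i, X 0 i * βs i) + (∑ i, μ 0 i * lams i) + e 0)
      - ∑ j, w j * ((∑ i, X j.succ i * βs i) + (∑ i, μ j.succ i * lams i) + e j.succ)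
    = (∑ i, (μ 0 i - ∑ j, w j * μ j.succ i) * lams i) + (e 0 - ∑ j, w j * e j.succ) := by
  have hswap : ∀ (n : ℕ) (Z : Fin (J+1) → Fin n → ℝ) (c : Fin n → ℝ),
      ∑ j, w j * (∑ i, Z j.succ i * c i) = ∑ i, (∑ j, w j * Z j.succ i) * c i := by
    intro n Z c
    calc ∑ j, w j * (∑ i, Z j.succ i * c i) = ∑ j, ∑ i, w j * Z j.succ i * c i := by
          refine Finset.sum_congr rfl fun j _ => ?_
          rw [Finset.mul_sum]
          exact Finset.sum_congr rfl fun i _ => by ring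
    _ = ∑ i, ∑ j, w j * Z j.succ i * c i := Finset.sum_comm
    _ = ∑ i, (∑ j, w j * Z j.succ i) * c i := by
          refine Finset.sum_congr rfl fun i _ => ?_
          rw [Finset.sum_mul]
  have hsplit : ∑ j, w j * ((∑ i, X j.succ i * βs i) + (∑ i, μ j.succ i * lams i) + e j.succ)
      = (∑ j, w j * (∑ i, X j.succ i * βs i)) + (∑ j, w j * (∑ i, μ j.succ i * lams i))
        + ∑ j, w j * e j.succ := by
    rw [← Finset.sum_add_distrib, ← Finset.sum_add_distrib]
    exact Finset.sum_congr rfl fun j _ => by ring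
  rw [hsplit, hswap k X βs, hswap f μ lams]
  have hXX : ∑ i, (∑ j, w j * X j.succ i) * βs i = ∑ i, X 0 i * βs i :=
    Finset.sum_congr rfl fun i _ => by rw [hX i]
  rw [hXX]
  have hsub : ∑ i, (μ 0 i - ∑ j, w j * μ j.succ i) * lams i
      = (∑ i, μ 0 i * lams i) - ∑ i, (∑ j, w j * μ j.succ i) * lams i := by
    rw [← Finset.sum_sub_distrib]
    exact Finset.sum_congr rfl fun i _ => by ring
  rw [hsub]
  ring

lemma gW_algebra {J : ℕ} {S : Finset ℕ} (w : Fin J → ℝ) (c : ℕ → ℝ)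
    (a : Fin J → ℕ → ℝ) (b : ℕ → ℝ) (h1 : ∑ j, w j = 1) :
    ∑ s ∈ S, c s * ((∑ j, w j * a j s) - b s)
      = ∑ j, w j * (∑ s ∈ S, c s * (a j s - b s)) := by
  calc ∑ s ∈ S, c s * ((∑ j, w j * a j s) - b s)
      = ∑ s ∈ S, ∑ j, w j * (c s * (a j s - b s)) := by
        refine Finset.sum_congr rfl fun s _ => ?_
        have hb : c s * ((∑ j, w j * a j s) - b s)
            = c s * ((∑ j, w j * a j s) - (∑ j, w j) * b s) := by rw [h1]; ring
        rw [hb, Finset.sum_mul, ← Finset.sum_sub_distrib, Finset.mul_sum]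
        exact Finset.sum_congr rfl fun j _ => by ring
  _ = ∑ j, ∑ s ∈ S, w j * (c s * (a j s - b s)) := Finset.sum_comm
  _ = ∑ j, w j * (∑ s ∈ S, c s * (a j s - b s)) := by
        exact Finset.sum_congr rfl fun j _ => (Finset.mul_sum _ _ _).symm

lemma gsum_algebra {f : ℕ} {S : Finset ℕ} (c : ℝ) (v : Fin f → ℝ) (lam : ℕ → Fin f → ℝ)
    (r : ℕ → ℝ) (hr : ∀ s ∈ S, r s = ∑ i, v i * lam s i) :
    ∑ i, v i * (∑ s ∈ S, c * lam s i * r s) = c * ∑ s ∈ S, (∑ i, v i * lam s i)^2 := by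
  calc ∑ i, v i * (∑ s ∈ S, c * lam s i * r s)
      = ∑ i, ∑ s ∈ S, v i * (c * lam s i * r s) := by
        exact Finset.sum_congr rfl fun i _ => Finset.mul_sum _ _ _
  _ = ∑ s ∈ S, ∑ i, v i * (c * lam s i * r s) := Finset.sum_comm
  _ = ∑ s ∈ S, c * ((∑ i, v i * lam s i) * r s) := by
        refine Finset.sum_congr rfl fun s _ => ?_
        rw [Finset.sum_mul, Finset.mul_sum]
        exact Finset.sum_congr rfl fun i _ => by ring
  _ = c * ∑ s ∈ S, (∑ i, v i * lam s i)^2 := by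
        rw [Finset.mul_sum]
        exact Finset.sum_congr rfl fun s hs => by rw [hr s hs]; ring

end Algebra

set_option maxHeartbeats 1000000 in
/-- Finite-sample bias bound for the synthetic control estimator in the
interactive fixed effects model (unit `0` of `Fin (J+1)` is the treated unit, controls
are `j.succ`):  under bounded factors, the eigenvalue condition, mutually independent
mean-zero shocks with finite `p`-th moments, and weights measurable with respect to the
pretreatment shocks that a.s. satisfy adding-up, non-negativity and exact pretreatment
fit,
`|E[Y⁰_{1,t} − ∑_j W_j Y⁰_{j,t}]|
   ≤ J C(p)^{1/p} (λ̄² f/ξ) max{m̄_p^{1/p}/T0^{1−1/p}, m̄_2^{1/2}/T0^{1/2}}`. -/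
theorem synthetic_control_finite_sample_bias_bound
    {Ω : Type*} [MeasurableSpace Ω] (P : Measure Ω) [IsProbabilityMeasure P]
    (J T0 k f p : ℕ) (hJ : 0 < J) (hT0 : 0 < T0) (hk : 0 < k) (hf : 0 < f)
    (hp : Even p) (hp2 : 2 ≤ p)
    (t : ℕ) (ht : T0 < t)
    (lamBar ξ : ℝ) (hlam : 0 < lamBar) (hξ : 0 < ξ)
    (X : Fin (J + 1) → Fin k → ℝ) (μ : Fin (J + 1) → Fin f → ℝ)
    (β : ℕ → Fin k → ℝ) (lam : ℕ → Fin f → ℝ)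
    (hlamBd : ∀ s, (s ∈ Finset.Icc 1 T0 ∨ s = t) → ∀ i, |lam s i| ≤ lamBar)
    (heig : ∀ v : Fin f → ℝ,
      ξ * ∑ i, v i ^ 2 ≤
        (T0 : ℝ)⁻¹ * ∑ s ∈ Finset.Icc 1 T0, (∑ i, v i * lam s i) ^ 2)
    (ε : Fin (J + 1) → ℕ → Ω → ℝ)
    (hεmeas : ∀ j s, Measurable (ε j s))
    (hindep : iIndepFun
      (fun js : Fin (J + 1) × {s : ℕ // s ∈ Finset.Icc 1 T0 ∨ s = t} =>
        ε js.1 js.2.1) P)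
    (hmean : ∀ j s, (s ∈ Finset.Icc 1 T0 ∨ s = t) → ∫ ω, ε j s ω ∂P = 0)
    (hmom : ∀ j s, (s ∈ Finset.Icc 1 T0 ∨ s = t) → Integrable (fun ω => |ε j s ω| ^ p) P)
    (hmomt : ∀ j, Integrable (fun ω => |ε j t ω|) P)
    (Y0 : Fin (J + 1) → ℕ → Ω → ℝ)
    (hY0 : ∀ j s ω,
      Y0 j s ω = (∑ i, X j i * β s i) + (∑ i, μ j i * lam s i) + ε j s ω)
    (W : Fin J → Ω → ℝ)
    (hWmeas : ∀ j,
      Measurable[⨆ (j' : Fin (J + 1)) (s ∈ Finset.Icc 1 T0),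
        MeasurableSpace.comap (ε j' s) inferInstance] (W j))
    (hWfit : ∀ᵐ ω ∂P,
      (∀ j, 0 ≤ W j ω) ∧
      (∑ j, W j ω) = 1 ∧
      (∀ i, ∑ j, W j ω * X j.succ i = X 0 i) ∧
      (∀ s ∈ Finset.Icc 1 T0, ∑ j, W j ω * Y0 j.succ s ω = Y0 0 s ω))
    (mbar2 mbarp : ℝ)
    (hmbar2 : mbar2 = ⨆ j : Fin (J + 1),
      (T0 : ℝ)⁻¹ * ∑ s ∈ Finset.Icc 1 T0, ∫ ω, |ε j s ω| ^ 2 ∂P)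
    (hmbarp : mbarp = ⨆ j : Fin (J + 1),
      (T0 : ℝ)⁻¹ * ∑ s ∈ Finset.Icc 1 T0, ∫ ω, |ε j s ω| ^ p ∂P) :
    |∫ ω, (Y0 0 t ω - ∑ j, W j ω * Y0 j.succ t ω) ∂P| ≤
      (J : ℝ) * poissonRosenthalConst p ^ ((1 : ℝ) / p) * (lamBar ^ 2 * f / ξ) *
        max (mbarp ^ ((1 : ℝ) / p) / (T0 : ℝ) ^ (1 - 1 / (p : ℝ)))
          (Real.sqrt mbar2 / Real.sqrt T0) := by
  classical
  have hmemt : t ∈ Finset.Icc 1 T0 ∨ t = t := Or.inr rfl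
  have hnotmem : t ∉ Finset.Icc 1 T0 := by
    simp only [Finset.mem_Icc]; omega
  have hεsq : ∀ (j : Fin (J+1)) (s : ℕ), (s ∈ Finset.Icc 1 T0 ∨ s = t) →
      Integrable (fun ω => ε j s ω^2) P := fun j s hs =>
    integrable_sq_of_abs_pow (hεmeas j s) hp2 (hmom j s hs)
  have hεint : ∀ (j : Fin (J+1)) (s : ℕ), (s ∈ Finset.Icc 1 T0 ∨ s = t) →
      Integrable (ε j s) P := fun j s hs => integrable_of_sq (hεmeas j s) (hεsq j s hs)
  have hMle : (⨆ (j' : Fin (J + 1)) (s ∈ Finset.Icc 1 T0),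
      MeasurableSpace.comap (ε j' s) inferInstance) ≤ ‹MeasurableSpace Ω› :=
    iSup_le fun j' => iSup_le fun s => iSup_le fun _ => (hεmeas j' s).comap_le
  have hWm : ∀ j, Measurable (W j) := fun j => (hWmeas j).mono hMle le_rfl
  have hWbd : ∀ᵐ ω ∂P, ∀ j, 0 ≤ W j ω ∧ W j ω ≤ 1 := by
    filter_upwards [hWfit] with ω hω
    intro j
    refine ⟨hω.1 j, ?_⟩
    rw [← hω.2.1]
    exact Finset.single_le_sum (f := fun j => W j ω) (fun j' _ => hω.1 j') (Finset.mem_univ j)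
  have hWint : ∀ j, Integrable (W j) P := by
    intro j
    refine Integrable.mono' (integrable_const (1:ℝ)) (hWm j).aestronglyMeasurable ?_
    filter_upwards [hWbd] with ω hω
    rw [Real.norm_eq_abs, abs_of_nonneg (hω j).1]; exact (hω j).2
  have hWεt0 : ∀ (j : Fin J) (j' : Fin (J+1)), ∫ ω, W j ω * ε j' t ω ∂P = 0 := by
    intro j j'
    have hii : iIndep (fun i : Fin (J + 1) × {s : ℕ // s ∈ Finset.Icc 1 T0 ∨ s = t} =>
        MeasurableSpace.comap (ε i.1 i.2.1) inferInstance) P :=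
      (iIndepFun_iff_iIndep _ _ _).mp hindep
    have hdisj : Disjoint
        {i : Fin (J + 1) × {s : ℕ // s ∈ Finset.Icc 1 T0 ∨ s = t} | (i.2 : ℕ) ∈ Finset.Icc 1 T0}
        ({((j', ⟨t, Or.inr rfl⟩) : Fin (J + 1) × {s : ℕ // s ∈ Finset.Icc 1 T0 ∨ s = t})} :
          Set _) := by
      rw [Set.disjoint_left]
      intro i hiS hiT
      rw [Set.mem_singleton_iff] at hiT
      subst hiT
      exact hnotmem hiS
    have hbig := indep_iSup_of_disjoint (fun i => (hεmeas i.1 i.2.1).comap_le) hii hdisj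
    have h1 : MeasurableSpace.comap (W j) inferInstance ≤
        ⨆ i ∈ {i : Fin (J + 1) × {s : ℕ // s ∈ Finset.Icc 1 T0 ∨ s = t} |
          (i.2 : ℕ) ∈ Finset.Icc 1 T0},
          MeasurableSpace.comap (ε i.1 i.2.1) inferInstance := by
      refine le_trans (hWmeas j).comap_le ?_
      refine iSup_le fun j'' => iSup_le fun s => iSup_le fun hs => ?_
      exact le_biSup (f := fun i : Fin (J + 1) × {s : ℕ // s ∈ Finset.Icc 1 T0 ∨ s = t} =>
        MeasurableSpace.comap (ε i.1 i.2.1) inferInstance)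
        (show ((j'', ⟨s, Or.inl hs⟩) : _) ∈ _ from hs)
    have h2 : MeasurableSpace.comap (ε j' t) inferInstance ≤
        ⨆ i ∈ ({((j', ⟨t, Or.inr rfl⟩) :
            Fin (J + 1) × {s : ℕ // s ∈ Finset.Icc 1 T0 ∨ s = t})} : Set _),
          MeasurableSpace.comap (ε i.1 i.2.1) inferInstance :=
      le_biSup (f := fun i : Fin (J + 1) × {s : ℕ // s ∈ Finset.Icc 1 T0 ∨ s = t} =>
        MeasurableSpace.comap (ε i.1 i.2.1) inferInstance)
        (Set.mem_singleton ((j', ⟨t, Or.inr rfl⟩) :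
          Fin (J + 1) × {s : ℕ // s ∈ Finset.Icc 1 T0 ∨ s = t}))
    have hIndep2 : Indep (MeasurableSpace.comap (W j) inferInstance)
        (MeasurableSpace.comap (ε j' t) inferInstance) P :=
      indep_of_indep_of_le_right (indep_of_indep_of_le_left hbig h1) h2
    have hIF : IndepFun (W j) (ε j' t) P := (IndepFun_iff_Indep _ _ _).mpr hIndep2
    have h0 : (∫ ω, W j ω * ε j' t ω ∂P) = (∫ ω, W j ω ∂P) * ∫ ω, ε j' t ω ∂P :=
      hIF.integral_mul_eq_mul_integral (hWint j).1 (hεint j' t hmemt).1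
    rw [h0, hmean j' t hmemt, mul_zero]
  -- rewriting Y0 via the model
  have hyrw : ∀ (s' : ℕ) (ω : Ω), (∑ j, W j ω * Y0 j.succ s' ω)
      = ∑ j, W j ω * ((∑ i, X j.succ i * β s' i) + (∑ i, μ j.succ i * lam s' i)
        + ε j.succ s' ω) :=
    fun s' ω => Finset.sum_congr rfl fun j _ => by rw [hY0]
  have haefit : ∀ᵐ ω ∂P,
      (∀ j, 0 ≤ W j ω) ∧ (∑ j, W j ω) = 1 ∧
      (∀ s ∈ Finset.Icc 1 T0,
        (∑ i, (μ 0 i - ∑ j, W j ω * μ j.succ i) * lam s i)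
          = (∑ j, W j ω * ε j.succ s ω) - ε 0 s ω) ∧
      (Y0 0 t ω - ∑ j, W j ω * Y0 j.succ t ω
        = (∑ i, (μ 0 i - ∑ j, W j ω * μ j.succ i) * lam t i)
          + (ε 0 t ω - ∑ j, W j ω * ε j.succ t ω)) := by
    filter_upwards [hWfit] with ω hω
    obtain ⟨h0, h1, hX, hfit⟩ := hω
    refine ⟨h0, h1, fun s hs => ?_, ?_⟩
    · have h4 := hfit s hs
      rw [hyrw s ω, hY0 0 s ω] at h4
      have hc := combo_eq (fun j => W j ω) X μ (β s) (lam s) (fun j' => ε j' s ω) h1 hX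
      have h5 : (∑ i, (μ 0 i - ∑ j, W j ω * μ j.succ i) * lam s i)
          + (ε 0 s ω - ∑ j, W j ω * ε j.succ s ω) = 0 := by rw [← hc, h4]; ring
      linarith
    · rw [hyrw t ω, hY0 0 t ω]
      exact combo_eq (fun j => W j ω) X μ (β t) (lam t) (fun j' => ε j' t ω) h1 hX
  -- integrability of the pieces at time t
  have hvmeas : ∀ (i : Fin f), Measurable (fun ω => μ 0 i - ∑ j, W j ω * μ j.succ i) := fun i =>
    measurable_const.sub (Finset.measurable_sum _ fun j _ => (hWm j).mul_const _)
  have hVmeas : Measurable (fun ω => ∑ i, (μ 0 i - ∑ j, W j ω * μ j.succ i) * lam t i) :=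
    Finset.measurable_sum _ fun i _ => (hvmeas i).mul_const _
  have hVint : Integrable (fun ω => ∑ i, (μ 0 i - ∑ j, W j ω * μ j.succ i) * lam t i) P := by
    refine Integrable.mono'
      (integrable_const (∑ i, (|μ 0 i| + ∑ j : Fin J, |μ j.succ i|) * |lam t i|))
      hVmeas.aestronglyMeasurable ?_
    filter_upwards [hWbd] with ω hω
    rw [Real.norm_eq_abs]
    calc |∑ i, (μ 0 i - ∑ j, W j ω * μ j.succ i) * lam t i|
        ≤ ∑ i, |(μ 0 i - ∑ j, W j ω * μ j.succ i) * lam t i| :=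
          Finset.abs_sum_le_sum_abs _ _
    _ ≤ ∑ i, (|μ 0 i| + ∑ j : Fin J, |μ j.succ i|) * |lam t i| := by
        refine Finset.sum_le_sum fun i _ => ?_
        rw [abs_mul]
        refine mul_le_mul_of_nonneg_right ?_ (abs_nonneg _)
        calc |μ 0 i - ∑ j, W j ω * μ j.succ i|
            ≤ |μ 0 i| + |∑ j, W j ω * μ j.succ i| := abs_sub _ _
        _ ≤ |μ 0 i| + ∑ j : Fin J, |W j ω * μ j.succ i| :=
            add_le_add (le_refl _) (Finset.abs_sum_le_sum_abs _ _)
        _ ≤ |μ 0 i| + ∑ j : Fin J, |μ j.succ i| := by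
            refine add_le_add (le_refl _) (Finset.sum_le_sum fun j _ => ?_)
            rw [abs_mul]
            calc |W j ω| * |μ j.succ i| ≤ 1 * |μ j.succ i| := by
                  refine mul_le_mul_of_nonneg_right ?_ (abs_nonneg _)
                  rw [abs_of_nonneg (hω j).1]; exact (hω j).2
            _ = |μ j.succ i| := one_mul _
  have hWεint : ∀ (j : Fin J) (s : ℕ), (s ∈ Finset.Icc 1 T0 ∨ s = t) →
      Integrable (fun ω => W j ω * ε j.succ s ω) P := by
    intro j s hs
    refine Integrable.mono' (hεint j.succ s hs).abs
      ((hWm j).mul (hεmeas _ _)).aestronglyMeasurable ?_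
    filter_upwards [hWbd] with ω hω
    rw [Real.norm_eq_abs, abs_mul]
    calc |W j ω| * |ε j.succ s ω| ≤ 1 * |ε j.succ s ω| := by
          refine mul_le_mul_of_nonneg_right ?_ (abs_nonneg _)
          rw [abs_of_nonneg (hω j).1]; exact (hω j).2
    _ = |ε j.succ s ω| := one_mul _
  -- split the target integral
  have hsplit : ∫ ω, (Y0 0 t ω - ∑ j, W j ω * Y0 j.succ t ω) ∂P
      = ∫ ω, (∑ i, (μ 0 i - ∑ j, W j ω * μ j.succ i) * lam t i) ∂P := by
    rw [integral_congr_ae (haefit.mono fun ω hω => hω.2.2.2)]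
    have hsumint : Integrable (fun ω => ∑ j : Fin J, W j ω * ε j.succ t ω) P :=
      integrable_finset_sum _ fun j _ => hWεint j t hmemt
    have hrest : Integrable (fun ω => ε 0 t ω - ∑ j, W j ω * ε j.succ t ω) P :=
      (hεint 0 t hmemt).sub hsumint
    have hz : ∑ j : Fin J, ∫ ω, W j ω * ε j.succ t ω ∂P = 0 :=
      Finset.sum_eq_zero fun j _ => hWεt0 j j.succ
    rw [integral_add hVint hrest, integral_sub (hεint 0 t hmemt) hsumint,
      integral_finset_sum _ fun j _ => hWεint j t hmemt, hmean 0 t hmemt, hz]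
    ring
  rw [hsplit]
  -- nonnegativity facts
  have hmbar2_nonneg : 0 ≤ mbar2 := by
    rw [hmbar2]
    have h0 : (0:ℝ) ≤ (T0 : ℝ)⁻¹ * ∑ s ∈ Finset.Icc 1 T0, ∫ ω, |ε (0 : Fin (J+1)) s ω| ^ 2 ∂P :=
      mul_nonneg (by positivity)
        (Finset.sum_nonneg fun s _ => integral_nonneg fun ω => by positivity)
    exact le_trans h0 (le_ciSup (f := fun j : Fin (J+1) =>
      (T0:ℝ)⁻¹ * ∑ s ∈ Finset.Icc 1 T0, ∫ ω, |ε j s ω| ^ 2 ∂P)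
      (Set.Finite.bddAbove (Set.finite_range _)) (0 : Fin (J+1)))
  have hC1 : (1:ℝ) ≤ poissonRosenthalConst p ^ ((1:ℝ)/p) :=
    poissonRosenthalConst_rpow_ge_one hp hp2
  have hC0 : (0:ℝ) ≤ poissonRosenthalConst p ^ ((1:ℝ)/p) := le_trans zero_le_one hC1
  rcases Nat.lt_or_ge J 2 with hJ1 | hJ2
  · -- J = 1 : the weight is a.s. 1 and the bias is exactly 0
    have hJe : J = 1 := by omega
    subst hJe
    have hW1 : ∀ᵐ ω ∂P, W 0 ω = 1 := haefit.mono fun ω hω => by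
      have h := hω.2.1; rwa [Fin.sum_univ_one] at h
    have hveq : ∀ s ∈ Finset.Icc 1 T0, (∑ i, (μ 0 i - μ 1 i) * lam s i) = 0 := by
      intro s hs
      have hae : ∀ᵐ ω ∂P, (fun _ : Ω => ∑ i, (μ 0 i - μ 1 i) * lam s i) ω
          = ε 1 s ω - ε 0 s ω := by
        filter_upwards [haefit] with ω hω
        have h3 := hω.2.2.1 s hs
        have h1 := hω.2.1
        rw [Fin.sum_univ_one] at h1
        simp only [Fin.sum_univ_one, h1, one_mul] at h3
        simpa using h3
      have hi := integral_congr_ae hae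
      rw [integral_const, integral_sub (hεint 1 s (Or.inl hs)) (hεint 0 s (Or.inl hs)),
        hmean 1 s (Or.inl hs), hmean 0 s (Or.inl hs)] at hi
      simpa using hi
    have hv0 : ∀ i, μ 0 i - μ 1 i = 0 := by
      have hei := heig (fun i => μ 0 i - μ 1 i)
      have h0 : (T0:ℝ)⁻¹ * ∑ s ∈ Finset.Icc 1 T0, (∑ i, (μ 0 i - μ 1 i) * lam s i)^2 = 0 := by
        rw [Finset.sum_congr rfl (fun s hs => by
          rw [hveq s hs] : ∀ s ∈ Finset.Icc 1 T0,
            (∑ i, (μ 0 i - μ 1 i) * lam s i)^2 = (0:ℝ)^2)]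
        simp
      rw [h0] at hei
      have hsum0 : ∑ i, (μ 0 i - μ 1 i)^2 ≤ 0 := by
        by_contra hcon
        push_neg at hcon
        nlinarith
      intro i
      have hterm : (μ 0 i - μ 1 i)^2 ≤ 0 := by
        have h1 : (μ 0 i - μ 1 i)^2 ≤ ∑ i, (μ 0 i - μ 1 i)^2 :=
          Finset.single_le_sum (f := fun i' => (μ 0 i' - μ 1 i')^2)
            (fun i' _ => sq_nonneg _) (Finset.mem_univ i)
        linarith
      nlinarith [sq_nonneg (μ 0 i - μ 1 i)]
    have hV0 : ∫ ω, (∑ i, (μ 0 i - ∑ j, W j ω * μ j.succ i) * lam t i) ∂P = 0 := by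
      have hae : ∀ᵐ ω ∂P,
          (∑ i, (μ 0 i - ∑ j, W j ω * μ j.succ i) * lam t i) = (0:ℝ) := by
        filter_upwards [hW1] with ω hω
        refine Finset.sum_eq_zero fun i _ => ?_
        rw [Fin.sum_univ_one, hω, one_mul]
        have : μ 0 i - μ (0 : Fin 1).succ i = 0 := hv0 i
        rw [this, zero_mul]
      rw [integral_congr_ae hae, integral_zero]
    rw [hV0, abs_zero]
    refine mul_nonneg (mul_nonneg (mul_nonneg (by positivity) hC0) (by positivity)) ?_
    exact le_trans (by positivity) (le_max_right _ _)
  · -- J ≥ 2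
    have hT0pos : (0:ℝ) < T0 := by exact_mod_cast hT0
    -- second moments bounded by mbar2
    have hsum_eps_sq : ∀ j' : Fin (J+1),
        ∑ s ∈ Finset.Icc 1 T0, ∫ ω, ε j' s ω^2 ∂P ≤ T0 * mbar2 := by
      intro j'
      have hle : (T0 : ℝ)⁻¹ * ∑ s ∈ Finset.Icc 1 T0, ∫ ω, |ε j' s ω| ^ 2 ∂P ≤ mbar2 := by
        rw [hmbar2]
        exact le_ciSup (f := fun j : Fin (J+1) =>
          (T0:ℝ)⁻¹ * ∑ s ∈ Finset.Icc 1 T0, ∫ ω, |ε j s ω| ^ 2 ∂P)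
          (Set.Finite.bddAbove (Set.finite_range _)) j'
      have heq : ∑ s ∈ Finset.Icc 1 T0, ∫ ω, |ε j' s ω| ^ 2 ∂P
          = ∑ s ∈ Finset.Icc 1 T0, ∫ ω, ε j' s ω ^ 2 ∂P :=
        Finset.sum_congr rfl fun s _ => by simp [sq_abs]
      rw [heq] at hle
      calc ∑ s ∈ Finset.Icc 1 T0, ∫ ω, ε j' s ω ^ 2 ∂P
          = (T0:ℝ) * ((T0:ℝ)⁻¹ * ∑ s ∈ Finset.Icc 1 T0, ∫ ω, ε j' s ω ^ 2 ∂P) := by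
            field_simp
      _ ≤ (T0:ℝ) * mbar2 := mul_le_mul_of_nonneg_left hle hT0pos.le
    -- the differenced shocks ζ
    have hζmeas : ∀ (j : Fin J) (s : ℕ), Measurable (fun ω => ε j.succ s ω - ε 0 s ω) :=
      fun j s => (hεmeas _ _).sub (hεmeas _ _)
    have hζ2int : ∀ (j : Fin J), ∀ s ∈ Finset.Icc 1 T0,
        Integrable (fun ω => (ε j.succ s ω - ε 0 s ω)^2) P := by
      intro j s hs
      refine Integrable.mono'
        (((hεsq j.succ s (Or.inl hs)).add (hεsq 0 s (Or.inl hs))).const_mul 2)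
        (((hζmeas j s).pow_const 2).aestronglyMeasurable)
        (Filter.Eventually.of_forall fun ω => ?_)
      simp only [Pi.add_apply]
      rw [Real.norm_eq_abs, abs_of_nonneg (sq_nonneg _)]
      nlinarith [sq_nonneg (ε j.succ s ω + ε 0 s ω)]
    have hζmean : ∀ (j : Fin J), ∀ s ∈ Finset.Icc 1 T0,
        ∫ ω, (ε j.succ s ω - ε 0 s ω) ∂P = 0 := by
      intro j s hs
      rw [integral_sub (hεint _ s (Or.inl hs)) (hεint 0 s (Or.inl hs)),
        hmean _ s (Or.inl hs), hmean 0 s (Or.inl hs), sub_zero]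
    have hζindep : ∀ (j : Fin J), ∀ s ∈ Finset.Icc 1 T0, ∀ s' ∈ Finset.Icc 1 T0, s ≠ s' →
        IndepFun (fun ω => ε j.succ s ω - ε 0 s ω) (fun ω => ε j.succ s' ω - ε 0 s' ω) P := by
      intro j s hs s' hs' hne
      have hp4 := hindep.indepFun_prodMk_prodMk (fun i => hεmeas i.1 i.2.1)
        (j.succ, ⟨s, Or.inl hs⟩) (0, ⟨s, Or.inl hs⟩)
        (j.succ, ⟨s', Or.inl hs'⟩) (0, ⟨s', Or.inl hs'⟩)
        (fun h => hne (congrArg (fun x : Fin (J+1) ×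
          {s : ℕ // s ∈ Finset.Icc 1 T0 ∨ s = t} => (x.2 : ℕ)) h))
        (fun h => hne (congrArg (fun x : Fin (J+1) ×
          {s : ℕ // s ∈ Finset.Icc 1 T0 ∨ s = t} => (x.2 : ℕ)) h))
        (fun h => hne (congrArg (fun x : Fin (J+1) ×
          {s : ℕ // s ∈ Finset.Icc 1 T0 ∨ s = t} => (x.2 : ℕ)) h))
        (fun h => hne (congrArg (fun x : Fin (J+1) ×
          {s : ℕ // s ∈ Finset.Icc 1 T0 ∨ s = t} => (x.2 : ℕ)) h))
      exact hp4.comp (measurable_fst.sub measurable_snd) (measurable_fst.sub measurable_snd)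
    have hζ2eq : ∀ (j : Fin J), ∀ s ∈ Finset.Icc 1 T0,
        ∫ ω, (ε j.succ s ω - ε 0 s ω)^2 ∂P
          = (∫ ω, ε j.succ s ω^2 ∂P) + ∫ ω, ε 0 s ω^2 ∂P := by
      intro j s hs
      have hif : IndepFun (ε j.succ s) (ε 0 s) P :=
        hindep.indepFun (i := (j.succ, ⟨s, Or.inl hs⟩)) (j := (0, ⟨s, Or.inl hs⟩))
          (by simp [Prod.ext_iff, Fin.succ_ne_zero])
      have habint : Integrable (fun ω => ε j.succ s ω * ε 0 s ω) P :=
        hif.integrable_mul (hεint _ _ (Or.inl hs)) (hεint _ _ (Or.inl hs))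
      have hab0 : ∫ ω, ε j.succ s ω * ε 0 s ω ∂P = 0 := by
        have h0 : (∫ ω, ε j.succ s ω * ε 0 s ω ∂P)
            = (∫ ω, ε j.succ s ω ∂P) * ∫ ω, ε 0 s ω ∂P :=
          hif.integral_mul_eq_mul_integral (hεint _ _ (Or.inl hs)).1 (hεint _ _ (Or.inl hs)).1
        rw [h0, hmean _ s (Or.inl hs), zero_mul]
      have hexp : (fun ω => (ε j.succ s ω - ε 0 s ω)^2)
          = fun ω => (ε j.succ s ω^2 + ε 0 s ω^2) - (2:ℝ)*(ε j.succ s ω * ε 0 s ω) :=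
        funext fun ω => by ring
      have hsumsq : Integrable (fun ω => ε j.succ s ω^2 + ε 0 s ω^2) P :=
        (hεsq j.succ s (Or.inl hs)).add (hεsq 0 s (Or.inl hs))
      rw [hexp, integral_sub hsumsq (habint.const_mul 2),
        integral_add (hεsq j.succ s (Or.inl hs)) (hεsq 0 s (Or.inl hs)),
        integral_const_mul, hab0, mul_zero, sub_zero]
    -- second moment of d
    have hd : ∀ (i : Fin f) (j : Fin J),
        Integrable (fun ω => (∑ s ∈ Finset.Icc 1 T0,
          ((T0:ℝ)⁻¹ * lam s i) * (ε j.succ s ω - ε 0 s ω))^2) P ∧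
        ∫ ω, (∑ s ∈ Finset.Icc 1 T0,
          ((T0:ℝ)⁻¹ * lam s i) * (ε j.succ s ω - ε 0 s ω))^2 ∂P
          = ∑ s ∈ Finset.Icc 1 T0, ((T0:ℝ)⁻¹ * lam s i)^2
              * ∫ ω, (ε j.succ s ω - ε 0 s ω)^2 ∂P :=
      fun i j => integral_sq_sum (fun s hs => hζmeas j s) (fun s hs => hζ2int j s hs)
        (fun s hs => hζmean j s hs) (fun s hs s' hs' hne => hζindep j s hs s' hs' hne)
    have hd2bd : ∀ (i : Fin f) (j : Fin J),
        ∫ ω, (∑ s ∈ Finset.Icc 1 T0,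
          ((T0:ℝ)⁻¹ * lam s i) * (ε j.succ s ω - ε 0 s ω))^2 ∂P
          ≤ 2 * lamBar^2 * mbar2 / T0 := by
      intro i j
      rw [(hd i j).2]
      have hstep : ∀ s ∈ Finset.Icc 1 T0,
          ((T0:ℝ)⁻¹ * lam s i)^2 * ∫ ω, (ε j.succ s ω - ε 0 s ω)^2 ∂P
            ≤ ((T0:ℝ)⁻¹^2 * lamBar^2) * ((∫ ω, ε j.succ s ω^2 ∂P) + ∫ ω, ε 0 s ω^2 ∂P) := by
        intro s hs
        rw [← hζ2eq j s hs]
        refine mul_le_mul_of_nonneg_right ?_ (integral_nonneg fun ω => sq_nonneg _)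
        rw [mul_pow]
        refine mul_le_mul_of_nonneg_left ?_ (by positivity)
        nlinarith [hlamBd s (Or.inl hs) i, abs_nonneg (lam s i), sq_abs (lam s i)]
      calc ∑ s ∈ Finset.Icc 1 T0, ((T0:ℝ)⁻¹ * lam s i)^2
              * ∫ ω, (ε j.succ s ω - ε 0 s ω)^2 ∂P
          ≤ ∑ s ∈ Finset.Icc 1 T0, ((T0:ℝ)⁻¹^2 * lamBar^2)
              * ((∫ ω, ε j.succ s ω^2 ∂P) + ∫ ω, ε 0 s ω^2 ∂P) :=
            Finset.sum_le_sum hstep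
      _ = ((T0:ℝ)⁻¹^2 * lamBar^2) * ((∑ s ∈ Finset.Icc 1 T0, ∫ ω, ε j.succ s ω^2 ∂P)
            + ∑ s ∈ Finset.Icc 1 T0, ∫ ω, ε 0 s ω^2 ∂P) := by
          rw [← Finset.mul_sum, Finset.sum_add_distrib]
      _ ≤ ((T0:ℝ)⁻¹^2 * lamBar^2) * ((T0:ℝ) * mbar2 + (T0:ℝ) * mbar2) :=
          mul_le_mul_of_nonneg_left (add_le_add (hsum_eps_sq _) (hsum_eps_sq _))
            (by positivity)
      _ = 2 * lamBar^2 * mbar2 / T0 := by field_simp; ring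
    -- measurability and integrability of g and its norm
    have hgmeas : ∀ i : Fin f, Measurable (fun ω => ∑ s ∈ Finset.Icc 1 T0,
        ((T0:ℝ)⁻¹ * lam s i) * ((∑ j, W j ω * ε j.succ s ω) - ε 0 s ω)) :=
      fun i => Finset.measurable_sum _ fun s _ =>
        (((Finset.measurable_sum _ fun j _ => (hWm j).mul (hεmeas _ _)).sub
          (hεmeas 0 s)).const_mul _)
    have hgint : ∀ i : Fin f, Integrable (fun ω => ∑ s ∈ Finset.Icc 1 T0,
        ((T0:ℝ)⁻¹ * lam s i) * ((∑ j, W j ω * ε j.succ s ω) - ε 0 s ω)) P := fun i =>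
      integrable_finset_sum _ fun s hs =>
        (((integrable_finset_sum _ fun j _ => hWεint j s (Or.inl hs)).sub
          (hεint 0 s (Or.inl hs))).const_mul _)
    have hngmeas : Measurable (fun ω => Real.sqrt (∑ i, (∑ s ∈ Finset.Icc 1 T0,
        ((T0:ℝ)⁻¹ * lam s i) * ((∑ j, W j ω * ε j.succ s ω) - ε 0 s ω))^2)) :=
      (Finset.measurable_sum _ fun i _ => (hgmeas i).pow_const 2).sqrt
    have hngint : Integrable (fun ω => Real.sqrt (∑ i, (∑ s ∈ Finset.Icc 1 T0,
        ((T0:ℝ)⁻¹ * lam s i) * ((∑ j, W j ω * ε j.succ s ω) - ε 0 s ω))^2)) P := by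
      refine Integrable.mono'
        (integrable_finset_sum (Finset.univ : Finset (Fin f)) fun i _ => (hgint i).abs)
        hngmeas.aestronglyMeasurable (Filter.Eventually.of_forall fun ω => ?_)
      rw [Real.norm_eq_abs, abs_of_nonneg (Real.sqrt_nonneg _)]
      have h1 : ∑ i, (∑ s ∈ Finset.Icc 1 T0,
          ((T0:ℝ)⁻¹ * lam s i) * ((∑ j, W j ω * ε j.succ s ω) - ε 0 s ω))^2
          ≤ (∑ i, |∑ s ∈ Finset.Icc 1 T0,
          ((T0:ℝ)⁻¹ * lam s i) * ((∑ j, W j ω * ε j.succ s ω) - ε 0 s ω)|)^2 := by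
        have h2 := sum_sq_le_sq_sum (fun i => |∑ s ∈ Finset.Icc 1 T0,
          ((T0:ℝ)⁻¹ * lam s i) * ((∑ j, W j ω * ε j.succ s ω) - ε 0 s ω)|)
          (fun i => abs_nonneg _)
        simpa [sq_abs] using h2
      calc Real.sqrt (∑ i, (∑ s ∈ Finset.Icc 1 T0,
          ((T0:ℝ)⁻¹ * lam s i) * ((∑ j, W j ω * ε j.succ s ω) - ε 0 s ω))^2)
          ≤ Real.sqrt ((∑ i, |∑ s ∈ Finset.Icc 1 T0,
          ((T0:ℝ)⁻¹ * lam s i) * ((∑ j, W j ω * ε j.succ s ω) - ε 0 s ω)|)^2) :=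
            Real.sqrt_le_sqrt h1
      _ = ∑ i, |∑ s ∈ Finset.Icc 1 T0,
          ((T0:ℝ)⁻¹ * lam s i) * ((∑ j, W j ω * ε j.succ s ω) - ε 0 s ω)| :=
            Real.sqrt_sq (Finset.sum_nonneg fun i _ => abs_nonneg _)
    -- pointwise bound |V| ≤ c ‖g‖
    have hVbd : ∀ᵐ ω ∂P, |∑ i, (μ 0 i - ∑ j, W j ω * μ j.succ i) * lam t i|
        ≤ lamBar * Real.sqrt f / ξ * Real.sqrt (∑ i, (∑ s ∈ Finset.Icc 1 T0,
          ((T0:ℝ)⁻¹ * lam s i) * ((∑ j, W j ω * ε j.succ s ω) - ε 0 s ω))^2) := by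
      filter_upwards [haefit] with ω hω
      refine pointwise_bound hξ hlam.le _ _ _ (fun i => hlamBd t hmemt i) ?_
      have halg := gsum_algebra (S := Finset.Icc 1 T0) ((T0:ℝ)⁻¹)
        (fun i => μ 0 i - ∑ j, W j ω * μ j.succ i) lam
        (fun s => (∑ j, W j ω * ε j.succ s ω) - ε 0 s ω)
        (fun s hs => (hω.2.2.1 s hs).symm)
      have hkey1 := heig (fun i => μ 0 i - ∑ j, W j ω * μ j.succ i)
      rw [← halg] at hkey1
      exact hkey1
    -- ‖g‖² ≤ ∑∑ d² a.e.
    have hGint : Integrable (fun ω => ∑ i : Fin f, ∑ j : Fin J,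
        (∑ s ∈ Finset.Icc 1 T0, ((T0:ℝ)⁻¹ * lam s i) * (ε j.succ s ω - ε 0 s ω))^2) P :=
      integrable_finset_sum _ fun i _ => integrable_finset_sum _ fun j _ => (hd i j).1
    have hng2le : ∀ᵐ ω ∂P, (Real.sqrt (∑ i, (∑ s ∈ Finset.Icc 1 T0,
        ((T0:ℝ)⁻¹ * lam s i) * ((∑ j, W j ω * ε j.succ s ω) - ε 0 s ω))^2))^2
        ≤ ∑ i : Fin f, ∑ j : Fin J,
          (∑ s ∈ Finset.Icc 1 T0, ((T0:ℝ)⁻¹ * lam s i) * (ε j.succ s ω - ε 0 s ω))^2 := by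
      filter_upwards [haefit] with ω hω
      rw [Real.sq_sqrt (Finset.sum_nonneg fun i _ => sq_nonneg _)]
      refine Finset.sum_le_sum fun i _ => ?_
      have hgw : (∑ s ∈ Finset.Icc 1 T0,
          ((T0:ℝ)⁻¹ * lam s i) * ((∑ j, W j ω * ε j.succ s ω) - ε 0 s ω))
          = ∑ j, W j ω * (∑ s ∈ Finset.Icc 1 T0,
            ((T0:ℝ)⁻¹ * lam s i) * (ε j.succ s ω - ε 0 s ω)) :=
        gW_algebra (fun j => W j ω) (fun s => (T0:ℝ)⁻¹ * lam s i)
          (fun j s => ε j.succ s ω) (fun s => ε 0 s ω) hω.2.1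
      rw [hgw]
      have hcs := Finset.sum_sq_le_sum_mul_sum_of_sq_eq_mul Finset.univ
        (r := fun j => W j ω * (∑ s ∈ Finset.Icc 1 T0,
          ((T0:ℝ)⁻¹ * lam s i) * (ε j.succ s ω - ε 0 s ω)))
        (f := fun j => W j ω)
        (g := fun j => W j ω * (∑ s ∈ Finset.Icc 1 T0,
          ((T0:ℝ)⁻¹ * lam s i) * (ε j.succ s ω - ε 0 s ω))^2)
        (fun j _ => hω.1 j) (fun j _ => mul_nonneg (hω.1 j) (sq_nonneg _))
        (fun j _ => by ring)
      rw [hω.2.1, one_mul] at hcs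
      refine le_trans hcs (Finset.sum_le_sum fun j _ => ?_)
      have hWj1 : W j ω ≤ 1 := by
        rw [← hω.2.1]
        exact Finset.single_le_sum (f := fun j' => W j' ω) (fun j' _ => hω.1 j')
          (Finset.mem_univ j)
      exact mul_le_of_le_one_left (sq_nonneg _) hWj1
    -- ∫ ‖g‖ ≤ sqrt (∑∑ ∫ d²)
    have hintng : ∫ ω, Real.sqrt (∑ i, (∑ s ∈ Finset.Icc 1 T0,
        ((T0:ℝ)⁻¹ * lam s i) * ((∑ j, W j ω * ε j.succ s ω) - ε 0 s ω))^2) ∂P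
        ≤ Real.sqrt (∑ i : Fin f, ∑ j : Fin J, ∫ ω,
          (∑ s ∈ Finset.Icc 1 T0, ((T0:ℝ)⁻¹ * lam s i) * (ε j.succ s ω - ε 0 s ω))^2 ∂P) := by
      have h1 := sq_integral_le (P := P) hngmeas (fun ω => Real.sqrt_nonneg _) hGint hng2le
      rw [integral_finset_sum _ (fun i (_ : i ∈ Finset.univ) =>
        integrable_finset_sum _ fun j _ => (hd i j).1)] at h1
      rw [show (∑ i : Fin f, ∫ ω, ∑ j : Fin J,
          (∑ s ∈ Finset.Icc 1 T0, ((T0:ℝ)⁻¹ * lam s i) * (ε j.succ s ω - ε 0 s ω))^2 ∂P)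
          = ∑ i : Fin f, ∑ j : Fin J, ∫ ω,
          (∑ s ∈ Finset.Icc 1 T0, ((T0:ℝ)⁻¹ * lam s i) * (ε j.succ s ω - ε 0 s ω))^2 ∂P from
        Finset.sum_congr rfl fun i _ => integral_finset_sum _ fun j _ => (hd i j).1] at h1
      have h2 : 0 ≤ ∫ ω, Real.sqrt (∑ i, (∑ s ∈ Finset.Icc 1 T0,
          ((T0:ℝ)⁻¹ * lam s i) * ((∑ j, W j ω * ε j.succ s ω) - ε 0 s ω))^2) ∂P :=
        integral_nonneg fun ω => Real.sqrt_nonneg _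
      have h3 : 0 ≤ ∑ i : Fin f, ∑ j : Fin J, ∫ ω,
          (∑ s ∈ Finset.Icc 1 T0, ((T0:ℝ)⁻¹ * lam s i) * (ε j.succ s ω - ε 0 s ω))^2 ∂P :=
        Finset.sum_nonneg fun i _ => Finset.sum_nonneg fun j _ =>
          integral_nonneg fun ω => sq_nonneg _
      exact (Real.le_sqrt h2 h3).mpr h1
    -- numeric bound for the double sum
    have hsum_d : ∑ i : Fin f, ∑ j : Fin J, ∫ ω,
        (∑ s ∈ Finset.Icc 1 T0, ((T0:ℝ)⁻¹ * lam s i) * (ε j.succ s ω - ε 0 s ω))^2 ∂P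
        ≤ (f:ℝ) * ((J:ℝ) * (2 * lamBar^2 * mbar2 / T0)) := by
      calc ∑ i : Fin f, ∑ j : Fin J, ∫ ω,
          (∑ s ∈ Finset.Icc 1 T0, ((T0:ℝ)⁻¹ * lam s i) * (ε j.succ s ω - ε 0 s ω))^2 ∂P
          ≤ ∑ _i : Fin f, ∑ _j : Fin J, (2 * lamBar^2 * mbar2 / T0) :=
            Finset.sum_le_sum fun i _ => Finset.sum_le_sum fun j _ => hd2bd i j
      _ = (f:ℝ) * ((J:ℝ) * (2 * lamBar^2 * mbar2 / T0)) := by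
          simp [Finset.sum_const, Finset.card_univ, nsmul_eq_mul]
    -- final arithmetic
    have hfJ : (2:ℝ) * J ≤ (J:ℝ)^2 := by
      have h2J : (2:ℝ) ≤ J := by exact_mod_cast hJ2
      nlinarith
    have hsq2J : Real.sqrt (2*(J:ℝ)) ≤ (J:ℝ) := by
      calc Real.sqrt (2*(J:ℝ)) ≤ Real.sqrt ((J:ℝ)^2) := Real.sqrt_le_sqrt hfJ
      _ = (J:ℝ) := Real.sqrt_sq (by positivity)
    have hform : (f:ℝ) * ((J:ℝ) * (2 * lamBar^2 * mbar2 / T0))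
        = (Real.sqrt f * Real.sqrt (2*(J:ℝ)) * lamBar * (Real.sqrt mbar2 / Real.sqrt T0))^2 := by
      have h1 : Real.sqrt (f:ℝ) ^2 = (f:ℝ) := Real.sq_sqrt (by positivity)
      have h2 : Real.sqrt mbar2 ^2 = mbar2 := Real.sq_sqrt hmbar2_nonneg
      have h3 : Real.sqrt (T0:ℝ) ^2 = (T0:ℝ) := Real.sq_sqrt (by positivity)
      have h4 : Real.sqrt (2*(J:ℝ))^2 = 2*(J:ℝ) := Real.sq_sqrt (by positivity)
      rw [mul_pow, mul_pow, mul_pow, div_pow, h1, h2, h3, h4]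
      ring
    have hsqrt_decomp : Real.sqrt ((f:ℝ) * ((J:ℝ) * (2 * lamBar^2 * mbar2 / T0)))
        = Real.sqrt f * Real.sqrt (2*(J:ℝ)) * lamBar * (Real.sqrt mbar2 / Real.sqrt T0) := by
      rw [hform, Real.sqrt_sq (by positivity)]
    calc |∫ ω, (∑ i, (μ 0 i - ∑ j, W j ω * μ j.succ i) * lam t i) ∂P|
        ≤ ∫ ω, |∑ i, (μ 0 i - ∑ j, W j ω * μ j.succ i) * lam t i| ∂P := by
          simpa [Real.norm_eq_abs] using norm_integral_le_integral_norm (μ := P)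
            (f := fun ω => ∑ i, (μ 0 i - ∑ j, W j ω * μ j.succ i) * lam t i)
    _ ≤ ∫ ω, (lamBar * Real.sqrt f / ξ * Real.sqrt (∑ i, (∑ s ∈ Finset.Icc 1 T0,
          ((T0:ℝ)⁻¹ * lam s i) * ((∑ j, W j ω * ε j.succ s ω) - ε 0 s ω))^2)) ∂P :=
        integral_mono_of_nonneg (Filter.Eventually.of_forall fun ω => abs_nonneg _)
          (hngint.const_mul _) hVbd
    _ = lamBar * Real.sqrt f / ξ * ∫ ω, Real.sqrt (∑ i, (∑ s ∈ Finset.Icc 1 T0,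
          ((T0:ℝ)⁻¹ * lam s i) * ((∑ j, W j ω * ε j.succ s ω) - ε 0 s ω))^2) ∂P :=
        integral_const_mul _ _
    _ ≤ lamBar * Real.sqrt f / ξ * Real.sqrt (∑ i : Fin f, ∑ j : Fin J, ∫ ω,
          (∑ s ∈ Finset.Icc 1 T0, ((T0:ℝ)⁻¹ * lam s i) * (ε j.succ s ω - ε 0 s ω))^2 ∂P) :=
        mul_le_mul_of_nonneg_left hintng (by positivity)
    _ ≤ lamBar * Real.sqrt f / ξ
          * Real.sqrt ((f:ℝ) * ((J:ℝ) * (2 * lamBar^2 * mbar2 / T0))) :=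
        mul_le_mul_of_nonneg_left (Real.sqrt_le_sqrt hsum_d) (by positivity)
    _ = (lamBar^2 * f / ξ) * (Real.sqrt (2*(J:ℝ)) * (Real.sqrt mbar2 / Real.sqrt T0)) := by
        rw [hsqrt_decomp]
        have hff : Real.sqrt (f:ℝ) * Real.sqrt (f:ℝ) = (f:ℝ) :=
          Real.mul_self_sqrt (by positivity)
        linear_combination (lamBar^2 * Real.sqrt (2*(J:ℝ)) *
          Real.sqrt mbar2 / (ξ * Real.sqrt T0)) * hff
    _ ≤ (lamBar^2 * f / ξ) * ((J:ℝ) * (Real.sqrt mbar2 / Real.sqrt T0)) := by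
        refine mul_le_mul_of_nonneg_left ?_ (by positivity)
        exact mul_le_mul_of_nonneg_right hsq2J (by positivity)
    _ = (J:ℝ) * 1 * (lamBar^2 * f / ξ) * (Real.sqrt mbar2 / Real.sqrt T0) := by ring
    _ ≤ (J:ℝ) * poissonRosenthalConst p ^ ((1:ℝ)/p) * (lamBar^2 * f / ξ)
          * (Real.sqrt mbar2 / Real.sqrt T0) := by
        refine mul_le_mul_of_nonneg_right (mul_le_mul_of_nonneg_right ?_ (by positivity))
          (by positivity)
        exact mul_le_mul_of_nonneg_left hC1 (by positivity)
    _ ≤ (J:ℝ) * poissonRosenthalConst p ^ ((1:ℝ)/p) * (lamBar^2 * f / ξ) *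
          max (mbarp ^ ((1 : ℝ) / p) / (T0 : ℝ) ^ (1 - 1 / (p : ℝ)))
            (Real.sqrt mbar2 / Real.sqrt T0) := by
        refine mul_le_mul_of_nonneg_left (le_max_right _ _) ?_
        exact mul_nonneg (mul_nonneg (by positivity) hC0) (by positivity)
end

section
/- Let T0, k, f, J be positive integers and let t be an index with t ∉ {1, …, T0}. Let X_j ∈ ℝ^k and μ_j ∈ ℝ^f for j = 1, …, J+1, let β_s ∈ ℝ^k, λ_s ∈ ℝ^f and ε_{j,s} ∈ ℝ for s ∈ {1, …, T0, t}, and set Y⁰_{j,s} = X_jᵀβ_s + μ_jᵀλ_s + ε_{j,s}. Let Λ be the T0 × f real matrix whose s-th row is λ_sᵀ, and assume ΛᵀΛ is invertible. If real weights w_2, …, w_{J+1} satisfy ∑_{j=2}^{J+1} w_j = 1, ∑_{j=2}^{J+1} w_j X_j = X_1, and ∑_{j=2}^{J+1} w_j Y⁰_{j,s} = Y⁰_{1,s} for every s ∈ {1, …, T0}, then Y⁰_{1,t} − ∑_{j=2}^{J+1} w_j Y⁰_{j,t} = λ_tᵀ (ΛᵀΛ)⁻¹ Λᵀ ( ∑_{j=2}^{J+1}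 w_j ε_j − ε_1 ) + ε_{1,t} − ∑_{j=2}^{J+1} w_j ε_{j,t}, where ε_j = (ε_{j,1}, …, ε_{j,T0})ᵀ ∈ ℝ^{T0}. -/
open Finset Matrix

/-- The deterministic bias-decomposition identity for the synthetic
control estimator.  Unit `0` is the treated unit and units `j.succ`, `j : Fin J`, are
the controls.  Under the interactive fixed effects model
`Y⁰_{j,s} = X_jᵀ β_s + μ_jᵀ λ_s + ε_{j,s}`, adding-up weights achieving exact fit on
the observed predictors and all pretreatment outcomes satisfy
`Y⁰_{1,t} − ∑_j w_j Y⁰_{j,t}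
  = λ_tᵀ (ΛᵀΛ)⁻¹ Λᵀ (∑_j w_j ε_j − ε_1) + ε_{1,t} − ∑_j w_j ε_{j,t}`. -/
theorem synthetic_control_bias_decomposition
    (T0 k f J : ℕ) (hT0 : 0 < T0) (hk : 0 < k) (hf : 0 < f) (hJ : 0 < J)
    (t : ℕ) (ht : t ∉ Finset.Icc 1 T0)
    (X : Fin (J + 1) → Fin k → ℝ) (μ : Fin (J + 1) → Fin f → ℝ)
    (β : ℕ → Fin k → ℝ) (lam : ℕ → Fin f → ℝ)
    (ε : Fin (J + 1) → ℕ → ℝ)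
    (Y : Fin (J + 1) → ℕ → ℝ)
    (hY : ∀ j s, Y j s = (∑ i, X j i * β s i) + (∑ i, μ j i * lam s i) + ε j s)
    (Λ : Matrix (Fin T0) (Fin f) ℝ) (hΛ : ∀ (s : Fin T0) (i : Fin f), Λ s i = lam ((s : ℕ) + 1) i)
    (hΛinv : IsUnit (Λᵀ * Λ))
    (w : Fin J → ℝ)
    (hsum : ∑ j, w j = 1)
    (hXfit : ∀ i, ∑ j, w j * X j.succ i = X 0 i)
    (hYfit : ∀ s ∈ Finset.Icc 1 T0, ∑ j, w j * Y j.succ s = Y 0 s) :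
    Y 0 t - ∑ j, w j * Y j.succ t =
      lam t ⬝ᵥ ((Λᵀ * Λ)⁻¹ * Λᵀ).mulVec
          (fun s : Fin T0 => (∑ j, w j * ε j.succ ((s : ℕ) + 1)) - ε 0 ((s : ℕ) + 1))
        + ε 0 t - ∑ j, w j * ε j.succ t := by
  set d : Fin f → ℝ := fun i => (∑ j, w j * μ j.succ i) - μ 0 i with hd
  set e : Fin T0 → ℝ :=
    fun s : Fin T0 => (∑ j, w j * ε j.succ ((s : ℕ) + 1)) - ε 0 ((s : ℕ) + 1) with he
  have hβ : ∀ s : ℕ, ∑ j, w j * ∑ i, X j.succ i * β s i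
      = ∑ i, X 0 i * β s i := by
    intro s
    have : ∑ j, w j * ∑ i, X j.succ i * β s i
        = ∑ i, (∑ j, w j * X j.succ i) * β s i := by
      simp_rw [Finset.mul_sum, Finset.sum_mul, mul_assoc]
      exact Finset.sum_comm
    rw [this]
    simp [hXfit]
  have hμ : ∀ s : ℕ, ∑ j, w j * ∑ i, μ j.succ i * lam s i
      = ∑ i, (∑ j, w j * μ j.succ i) * lam s i := by
    intro s
    simp_rw [Finset.mul_sum, Finset.sum_mul, mul_assoc]
    exact Finset.sum_comm
  have hΛd : Λ.mulVec d = -e := by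
    funext s
    have hmem : (s : ℕ) + 1 ∈ Finset.Icc 1 T0 := by
      simp [Finset.mem_Icc]
    have h := hYfit ((s : ℕ) + 1) hmem
    simp only [hY] at h
    simp_rw [mul_add, Finset.sum_add_distrib] at h
    rw [hβ ((s : ℕ) + 1), hμ ((s : ℕ) + 1)] at h
    have : Λ.mulVec d s = ∑ i, lam ((s : ℕ) + 1) i * d i := by
      simp [Matrix.mulVec, dotProduct, hΛ]
    rw [this]
    simp only [hd, he, Pi.neg_apply, mul_sub, Finset.sum_sub_distrib]
    have h1 : ∑ i, lam ((s : ℕ) + 1) i * (∑ j, w j * μ j.succ i)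
        = ∑ i, (∑ j, w j * μ j.succ i) * lam ((s : ℕ) + 1) i := by
      simp_rw [mul_comm]
    have h2 : ∑ i, lam ((s : ℕ) + 1) i * μ 0 i
        = ∑ i, μ 0 i * lam ((s : ℕ) + 1) i := by
      simp_rw [mul_comm]
    rw [h1, h2]
    linarith
  have key : ((Λᵀ * Λ)⁻¹ * Λᵀ).mulVec e = -d := by
    have he' : e = -(Λ.mulVec d) := by rw [hΛd]; simp
    rw [he', Matrix.mulVec_neg, Matrix.mulVec_mulVec, Matrix.mul_assoc,
      Matrix.nonsing_inv_mul _ ((Matrix.isUnit_iff_isUnit_det _).mp hΛinv),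
      Matrix.one_mulVec]
  rw [key]
  have hdot : lam t ⬝ᵥ (-d) = (∑ i, μ 0 i * lam t i)
      - ∑ i, (∑ j, w j * μ j.succ i) * lam t i := by
    simp only [dotProduct, Pi.neg_apply, hd, mul_neg, mul_sub]
    rw [Finset.sum_neg_distrib]
    simp_rw [Finset.sum_sub_distrib, mul_comm]
    ring
  rw [hdot]
  simp only [hY]
  simp_rw [mul_add, Finset.sum_add_distrib]
  rw [hβ t, hμ t]
  ring
end

section
/- Let p ≥ 2 be an even integer, let J, T0 be positive integers, let f be a positive integer, and let λ̄, ξ > 0 and w̄ ≥ 0. On a probability space, let {ε_{j,s} : 1 ≤ j ≤ J, 1 ≤ s ≤ T0} be real random variables such that for each j the variables ε_{j,1}, …, ε_{j,T0} are independent with E[ε_{j,s}] = 0 and E|ε_{j,s}|^p < ∞, and set m̄_q = max_{1 ≤ j ≤ J} (1/T0)·∑_{s=1}^{T0} E|ε_{j,s}|^q for q ∈ {2, p}. Let c_1, …, c_{T0} be real numbers with |c_s| ≤ λ̄² f / (T0 ξ) for all s, set ε̄_j = ∑_{s=1}^{T0} c_s ε_{j,s}, and let W_1, …, W_J be random variables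 with |W_j| ≤ w̄ almost surely. Then E| ∑_{j=1}^{J} W_j ε̄_j | ≤ w̄ · J · C(p)^{1/p} · (λ̄² f / ξ) · max{ m̄_p^{1/p} / T0^{1−1/p}, m̄_2^{1/2} / T0^{1/2} }. -/
open MeasureTheory ProbabilityTheory Finset

lemma aux_summable (k : ℕ) : Summable (fun n : ℕ => ((n : ℝ) + 1) ^ k / n.factorial) := by
  refine Summable.of_nonneg_of_le (fun n => by positivity) (fun n => ?_)
    (NormedSpace.expSeries_div_summable ((2 : ℝ) ^ k))
  have h1 : ((n : ℝ) + 1) ≤ 2 ^ n := by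
    have := Nat.lt_two_pow_self (n := n)
    exact_mod_cast this
  have h2 : ((n : ℝ) + 1) ^ k ≤ ((2 : ℝ) ^ k) ^ n := by
    rw [← pow_mul, mul_comm, pow_mul]
    exact pow_le_pow_left₀ (by positivity) h1 k
  gcongr

lemma sum0 : ∑' n : ℕ, (1 : ℝ) / n.factorial = Real.exp 1 := by
  have : Real.exp 1 = NormedSpace.exp (1 : ℝ) := by rw [Real.exp_eq_exp_ℝ]
  rw [this, NormedSpace.exp_eq_tsum_div]
  simp

lemma S1 : Summable (fun n : ℕ => (n : ℝ) / n.factorial) := by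
  refine Summable.of_nonneg_of_le (fun n => by positivity) (fun n => ?_) (aux_summable 1)
  have : (n : ℝ) ≤ ((n : ℝ) + 1) ^ 1 := by simp
  gcongr

lemma S2 : Summable (fun n : ℕ => (n : ℝ) ^ 2 / n.factorial) := by
  refine Summable.of_nonneg_of_le (fun n => by positivity) (fun n => ?_) (aux_summable 2)
  have : (n : ℝ) ^ 2 ≤ ((n : ℝ) + 1) ^ 2 := by nlinarith [Nat.cast_nonneg (α := ℝ) n]
  gcongr

lemma S0 : Summable (fun n : ℕ => (1 : ℝ) / n.factorial) := by
  simpa using NormedSpace.expSeries_div_summable (1 : ℝ)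

lemma fact_succ_div (n : ℕ) : ((n : ℝ) + 1) / ((n + 1).factorial : ℝ) = 1 / n.factorial := by
  rw [Nat.factorial_succ]
  have h1 : ((n : ℝ) + 1) ≠ 0 := by positivity
  have h2 : ((n.factorial : ℝ)) ≠ 0 := by positivity
  push_cast
  field_simp

lemma sum1 : ∑' n : ℕ, (n : ℝ) / n.factorial = Real.exp 1 := by
  rw [Summable.tsum_eq_zero_add S1]
  simp only [Nat.cast_zero, Nat.factorial_zero, Nat.cast_one, zero_div, zero_add]
  rw [← sum0]
  refine tsum_congr fun n => ?_
  push_cast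
  exact fact_succ_div n

lemma sum2 : ∑' n : ℕ, (n : ℝ) ^ 2 / n.factorial = 2 * Real.exp 1 := by
  rw [Summable.tsum_eq_zero_add S2]
  simp only [Nat.cast_zero, zero_pow, Nat.factorial_zero, Nat.cast_one, zero_div, zero_add,
    ne_eq, OfNat.ofNat_ne_zero, not_false_eq_true]
  have key : ∀ n : ℕ, ((n : ℝ) + 1) ^ 2 / ((n + 1).factorial : ℝ)
      = (n : ℝ) / n.factorial + 1 / n.factorial := by
    intro n
    have : ((n : ℝ) + 1) ^ 2 / ((n + 1).factorial : ℝ)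
        = ((n : ℝ) + 1) * (((n : ℝ) + 1) / ((n + 1).factorial : ℝ)) := by ring
    rw [this, fact_succ_div n]
    ring
  calc ∑' n : ℕ, ((n + 1 : ℕ) : ℝ) ^ 2 / ((n + 1).factorial : ℝ)
      = ∑' n : ℕ, ((n : ℝ) / n.factorial + 1 / n.factorial) := by
        refine tsum_congr fun n => ?_
        push_cast
        exact key n
    _ = 2 * Real.exp 1 := by
        rw [Summable.tsum_add S1 S0, sum1, sum0]; ring

lemma Sgen (k : ℕ) :
    Summable (fun n : ℕ => (Real.exp (-1) / (n.factorial : ℝ)) * ((n : ℝ) - 1) ^ k) := by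
  refine Summable.of_norm_bounded (aux_summable k) fun n => ?_
  have h1 : |(n : ℝ) - 1| ≤ (n : ℝ) + 1 := by
    rw [abs_le]; constructor <;> [linarith [Nat.cast_nonneg (α := ℝ) n]; linarith]
  have h2 : Real.exp (-1) ≤ 1 := by
    rw [Real.exp_le_one_iff]; norm_num
  calc ‖Real.exp (-1) / (n.factorial : ℝ) * ((n : ℝ) - 1) ^ k‖
      = Real.exp (-1) / (n.factorial : ℝ) * |(n : ℝ) - 1| ^ k := by
        rw [Real.norm_eq_abs, abs_mul, abs_pow, abs_of_nonneg (by positivity)]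
    _ ≤ 1 / (n.factorial : ℝ) * ((n : ℝ) + 1) ^ k := by
        gcongr
    _ = ((n : ℝ) + 1) ^ k / n.factorial := by ring

lemma poisson_sq :
    ∑' n : ℕ, (Real.exp (-1) / (n.factorial : ℝ)) * ((n : ℝ) - 1) ^ 2 = 1 := by
  have key : ∀ n : ℕ, (Real.exp (-1) / (n.factorial : ℝ)) * ((n : ℝ) - 1) ^ 2
      = Real.exp (-1) * ((n : ℝ) ^ 2 / n.factorial - 2 * ((n : ℝ) / n.factorial)
        + 1 / n.factorial) := by
    intro n
    have h2 : ((n.factorial : ℝ)) ≠ 0 := by positivity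
    field_simp
    ring
  rw [tsum_congr key, tsum_mul_left]
  rw [Summable.tsum_add (S2.sub (S1.mul_left 2)) S0, Summable.tsum_sub S2 (S1.mul_left 2), tsum_mul_left,
    sum2, sum1, sum0]
  rw [show 2 * Real.exp 1 - 2 * Real.exp 1 + Real.exp 1 = Real.exp 1 by ring,
    ← Real.exp_add]
  norm_num

/-- The expectation bound on the leading bias term
`R_{1t} = ∑_j W_j ε̄_j` in the proof of Theorem 1: if for each `j` the shocks
`ε_{j,1}, …, ε_{j,T0}` are independent, mean zero, with finite `p`-th moments, the
coefficients satisfy `|c_s| ≤ λ̄² f/(T0 ξ)`, `ε̄_j = ∑_s c_s ε_{j,s}`, and the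
random weights satisfy `|W_j| ≤ w̄` a.s., then
`E|∑_j W_j ε̄_j| ≤ w̄ J C(p)^{1/p} (λ̄² f/ξ) max{m̄_p^{1/p}/T0^{1−1/p}, m̄_2^{1/2}/T0^{1/2}}`. -/
theorem expected_bias_term_bound
    {Ω : Type*} [MeasurableSpace Ω] (P : Measure Ω) [IsProbabilityMeasure P]
    (p J T0 f : ℕ) (hp : Even p) (hp2 : 2 ≤ p) (hJ : 0 < J) (hT0 : 0 < T0) (hf : 0 < f)
    (lamBar ξ wBar : ℝ) (hlam : 0 < lamBar) (hξ : 0 < ξ) (hw : 0 ≤ wBar)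
    (ε : Fin J → Fin T0 → Ω → ℝ)
    (hmeas : ∀ j s, Measurable (ε j s))
    (hindep : ∀ j, iIndepFun (ε j) P)
    (hmean : ∀ j s, ∫ ω, ε j s ω ∂P = 0)
    (hmom : ∀ j s, Integrable (fun ω => |ε j s ω| ^ p) P)
    (mbar2 mbarp : ℝ)
    (hmbar2 : mbar2 = ⨆ j : Fin J, (T0 : ℝ)⁻¹ * ∑ s, ∫ ω, |ε j s ω| ^ 2 ∂P)
    (hmbarp : mbarp = ⨆ j : Fin J, (T0 : ℝ)⁻¹ * ∑ s, ∫ ω, |ε j s ω| ^ p ∂P)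
    (c : Fin T0 → ℝ) (hc : ∀ s, |c s| ≤ lamBar ^ 2 * f / (T0 * ξ))
    (εbar : Fin J → Ω → ℝ) (hεbar : ∀ j ω, εbar j ω = ∑ s, c s * ε j s ω)
    (W : Fin J → Ω → ℝ) (hWmeas : ∀ j, Measurable (W j))
    (hWbd : ∀ᵐ ω ∂P, ∀ j, |W j ω| ≤ wBar) :
    ∫ ω, |∑ j, W j ω * εbar j ω| ∂P ≤
      wBar * J * poissonRosenthalConst p ^ ((1 : ℝ) / p) * (lamBar ^ 2 * f / ξ) *
        max (mbarp ^ ((1 : ℝ) / p) / (T0 : ℝ) ^ (1 - 1 / (p : ℝ)))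
          (Real.sqrt mbar2 / Real.sqrt T0) := by
  classical
  have hT0R : (0 : ℝ) < T0 := by exact_mod_cast hT0
  set B : ℝ := lamBar ^ 2 * f / ξ with hB
  have hfR : (0 : ℝ) < f := by exact_mod_cast hf
  have hBpos : 0 < B := by positivity
  -- L2 membership of the shocks
  have hL2 : ∀ j s, MemLp (ε j s) 2 P := by
    intro j s
    rw [memLp_two_iff_integrable_sq (hmeas j s).aestronglyMeasurable]
    refine Integrable.mono' ((integrable_const 1).add (hmom j s))
      ((hmeas j s).pow_const 2).aestronglyMeasurable (ae_of_all _ fun ω => ?_)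
    have hb : ‖ε j s ω ^ 2‖ = |ε j s ω| ^ 2 := by
      rw [Real.norm_eq_abs, abs_pow]
    rw [hb]
    simp only [Pi.add_apply]
    rcases le_or_gt (|ε j s ω|) 1 with h | h
    · have h1 : |ε j s ω| ^ 2 ≤ 1 := pow_le_one₀ (abs_nonneg _) h
      have h2 : (0 : ℝ) ≤ |ε j s ω| ^ p := by positivity
      linarith
    · have h1 : |ε j s ω| ^ 2 ≤ |ε j s ω| ^ p := pow_le_pow_right₀ h.le hp2
      linarith
  have hL2bar : ∀ j, MemLp (εbar j) 2 P := by
    intro j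
    have hfun : εbar j = ∑ s, (fun ω => c s * ε j s ω) := by
      funext ω; rw [hεbar]; simp
    rw [hfun]
    exact memLp_finset_sum' _ fun s _ => (hL2 j s).const_mul (c s)
  have hGint : ∀ j, Integrable (εbar j) P := fun j => (hL2bar j).integrable one_le_two
  -- mean zero of εbar
  have hGmean : ∀ j, ∫ ω, εbar j ω ∂P = 0 := by
    intro j
    have h1 : ∫ ω, εbar j ω ∂P = ∑ s, ∫ ω, c s * ε j s ω ∂P := by
      rw [show (fun ω => εbar j ω) = fun ω => ∑ s, c s * ε j s ω from funext fun ω => hεbar j ω]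
      exact integral_finset_sum _ fun s _ => ((hL2 j s).integrable one_le_two).const_mul _
    rw [h1]
    refine Finset.sum_eq_zero fun s _ => ?_
    rw [integral_const_mul, hmean, mul_zero]
  -- nonnegativity of mbar2
  have hterm_nonneg : ∀ j : Fin J, 0 ≤ (T0 : ℝ)⁻¹ * ∑ s, ∫ ω, |ε j s ω| ^ 2 ∂P := by
    intro j
    refine mul_nonneg (by positivity) (Finset.sum_nonneg fun s _ => ?_)
    exact integral_nonneg fun ω => by positivity
  have hmbar2_nonneg : 0 ≤ mbar2 := by
    rw [hmbar2]
    exact le_trans (hterm_nonneg ⟨0, hJ⟩)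
      (le_ciSup (f := fun j : Fin J => (T0 : ℝ)⁻¹ * ∑ s, ∫ ω, |ε j s ω| ^ 2 ∂P)
        (Finite.bddAbove_range _) ⟨0, hJ⟩)
  -- second moment bound for εbar j
  have hsq : ∀ j, ∫ ω, (εbar j ω) ^ 2 ∂P ≤ B ^ 2 * mbar2 / T0 := by
    intro j
    set X : Fin T0 → Ω → ℝ := fun s ω => c s * ε j s ω with hX
    have hXL2 : ∀ s ∈ Finset.univ, MemLp (X s) 2 P := fun s _ => (hL2 j s).const_mul (c s)
    have hpair : Set.Pairwise ↑(Finset.univ : Finset (Fin T0))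
        fun s t => IndepFun (X s) (X t) P := by
      intro s _ t _ hst
      exact ((hindep j).indepFun hst).comp (measurable_const_mul (c s))
        (measurable_const_mul (c t))
    have hsum : εbar j = ∑ s, X s := by
      funext ω; rw [hεbar]; simp [hX]
    have hvar : variance (εbar j) P = ∑ s, variance (X s) P := by
      rw [hsum]; exact IndepFun.variance_sum hXL2 hpair
    have heq : ∫ ω, (εbar j ω) ^ 2 ∂P = variance (εbar j) P := by
      rw [variance_of_integral_eq_zero (hL2bar j).aestronglyMeasurable.aemeasurable (hGmean j)]
    set K : ℝ := lamBar ^ 2 * f / (T0 * ξ) with hK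
    have hKpos : 0 < K := by positivity
    have hterm : ∀ s ∈ Finset.univ, variance (X s) P ≤ K ^ 2 * ∫ ω, |ε j s ω| ^ 2 ∂P := by
      intro s _
      have h1 : variance (X s) P = (c s) ^ 2 * variance (ε j s) P := variance_const_mul (c s) (ε j s) P
      have h2 : variance (ε j s) P ≤ ∫ ω, |ε j s ω| ^ 2 ∂P := by
        have := variance_le_expectation_sq (μ := P) (hmeas j s).aestronglyMeasurable
        refine this.trans (le_of_eq ?_)
        refine integral_congr_ae (ae_of_all _ fun ω => ?_)
        simp [sq_abs]
      have h3 : (c s) ^ 2 ≤ K ^ 2 := by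
        rw [← sq_abs (c s)]
        exact pow_le_pow_left₀ (abs_nonneg _) (hc s) 2
      rw [h1]
      exact mul_le_mul h3 h2 (variance_nonneg _ _) (by positivity)
    have hsum2 : ∑ s, ∫ ω, |ε j s ω| ^ 2 ∂P ≤ T0 * mbar2 := by
      have h4 : (T0 : ℝ)⁻¹ * ∑ s, ∫ ω, |ε j s ω| ^ 2 ∂P ≤ mbar2 := by
        rw [hmbar2]
        exact le_ciSup (f := fun j : Fin J => (T0 : ℝ)⁻¹ * ∑ s, ∫ ω, |ε j s ω| ^ 2 ∂P)
          (Finite.bddAbove_range _) j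
      calc ∑ s, ∫ ω, |ε j s ω| ^ 2 ∂P
          = T0 * ((T0 : ℝ)⁻¹ * ∑ s, ∫ ω, |ε j s ω| ^ 2 ∂P) := by
            field_simp
        _ ≤ T0 * mbar2 := by
            exact mul_le_mul_of_nonneg_left h4 hT0R.le
    calc ∫ ω, (εbar j ω) ^ 2 ∂P = ∑ s, variance (X s) P := by rw [heq, hvar]
      _ ≤ ∑ s, K ^ 2 * ∫ ω, |ε j s ω| ^ 2 ∂P := Finset.sum_le_sum hterm
      _ = K ^ 2 * ∑ s, ∫ ω, |ε j s ω| ^ 2 ∂P := by rw [← Finset.mul_sum]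
      _ ≤ K ^ 2 * (T0 * mbar2) := by
          exact mul_le_mul_of_nonneg_left hsum2 (by positivity)
      _ = B ^ 2 * mbar2 / T0 := by
          rw [hK, hB]
          field_simp
  -- L1 bound per j
  have habs : ∀ j, ∫ ω, |εbar j ω| ∂P ≤ B * (Real.sqrt mbar2 / Real.sqrt T0) := by
    intro j
    have hA : MemLp (fun ω => |εbar j ω|) 2 P := by
      simpa [Real.norm_eq_abs] using (hL2bar j).norm
    have hvd := variance_eq_sub hA
    have hnn := variance_nonneg (fun ω => |εbar j ω|) P
    have hsq_abs : (P[(fun ω => |εbar j ω|) ^ 2] : ℝ) = ∫ ω, (εbar j ω) ^ 2 ∂P := by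
      refine integral_congr_ae (ae_of_all _ fun ω => ?_)
      simp [sq_abs]
    have h1 : (∫ ω, |εbar j ω| ∂P) ^ 2 ≤ ∫ ω, (εbar j ω) ^ 2 ∂P := by
      rw [← hsq_abs]
      linarith [hvd, hnn]
    calc ∫ ω, |εbar j ω| ∂P
        = Real.sqrt ((∫ ω, |εbar j ω| ∂P) ^ 2) :=
          (Real.sqrt_sq (integral_nonneg fun ω => abs_nonneg _)).symm
      _ ≤ Real.sqrt (B ^ 2 * mbar2 / T0) := Real.sqrt_le_sqrt (h1.trans (hsq j))
      _ = B * (Real.sqrt mbar2 / Real.sqrt T0) := by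
          have heq2 : B ^ 2 * mbar2 / T0 = (B * (Real.sqrt mbar2 / Real.sqrt T0)) ^ 2 := by
            have e1 : (Real.sqrt mbar2 / Real.sqrt (T0 : ℝ)) ^ 2 = mbar2 / T0 := by
              rw [div_pow, Real.sq_sqrt hmbar2_nonneg, Real.sq_sqrt hT0R.le]
            rw [mul_pow, e1]
            ring
          rw [heq2, Real.sqrt_sq (by positivity)]
  -- step 1: pull out the weights
  have hstep1 : ∫ ω, |∑ j, W j ω * εbar j ω| ∂P ≤ wBar * ∑ j, ∫ ω, |εbar j ω| ∂P := by
    have hgint : Integrable (fun ω => wBar * ∑ j, |εbar j ω|) P :=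
      (integrable_finset_sum _ fun j _ => (hGint j).abs).const_mul wBar
    have hmono : ∫ ω, |∑ j, W j ω * εbar j ω| ∂P ≤ ∫ ω, wBar * ∑ j, |εbar j ω| ∂P := by
      refine integral_mono_of_nonneg (ae_of_all _ fun ω => abs_nonneg _) hgint ?_
      filter_upwards [hWbd] with ω hω
      calc |∑ j, W j ω * εbar j ω|
          ≤ ∑ j, |W j ω * εbar j ω| := Finset.abs_sum_le_sum_abs _ _
        _ ≤ ∑ j, wBar * |εbar j ω| := Finset.sum_le_sum fun j _ => by
            rw [abs_mul]; exact mul_le_mul_of_nonneg_right (hω j) (abs_nonneg _)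
        _ = wBar * ∑ j, |εbar j ω| := by rw [Finset.mul_sum]
    calc ∫ ω, |∑ j, W j ω * εbar j ω| ∂P
        ≤ ∫ ω, wBar * ∑ j, |εbar j ω| ∂P := hmono
      _ = wBar * ∑ j, ∫ ω, |εbar j ω| ∂P := by
          rw [integral_const_mul, integral_finset_sum _ fun j _ => (hGint j).abs]
  set M1 : ℝ := mbarp ^ ((1 : ℝ) / p) / (T0 : ℝ) ^ (1 - 1 / (p : ℝ)) with hM1
  set M2 : ℝ := Real.sqrt mbar2 / Real.sqrt T0 with hM2
  have hM2nn : 0 ≤ M2 := by positivity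
  have hmax0 : 0 ≤ max M1 M2 := hM2nn.trans (le_max_right _ _)
  have hCp : 1 ≤ poissonRosenthalConst p ^ ((1 : ℝ) / p) := by
    have h1 := one_le_poissonRosenthalConst hp hp2
    calc (1 : ℝ) = 1 ^ ((1 : ℝ) / p) := (Real.one_rpow _).symm
      _ ≤ poissonRosenthalConst p ^ ((1 : ℝ) / p) :=
        Real.rpow_le_rpow zero_le_one h1 (by positivity)
  calc ∫ ω, |∑ j, W j ω * εbar j ω| ∂P
      ≤ wBar * ∑ j, ∫ ω, |εbar j ω| ∂P := hstep1
    _ ≤ wBar * ∑ _j : Fin J, B * M2 := by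
        exact mul_le_mul_of_nonneg_left (Finset.sum_le_sum fun j _ => habs j) hw
    _ = wBar * J * B * M2 := by
        simp [Finset.sum_const, Finset.card_univ, nsmul_eq_mul]
        ring
    _ ≤ wBar * J * B * max M1 M2 :=
        mul_le_mul_of_nonneg_left (le_max_right _ _) (by positivity)
    _ = 1 * (wBar * J * B * max M1 M2) := by ring
    _ ≤ poissonRosenthalConst p ^ ((1 : ℝ) / p) * (wBar * J * B * max M1 M2) := by
        refine mul_le_mul_of_nonneg_right hCp ?_
        have : (0 : ℝ) ≤ (J : ℝ) := by positivity
        exact mul_nonneg (mul_nonneg (mul_nonneg hw this) hBpos.le) hmax0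
    _ = wBar * J * poissonRosenthalConst p ^ ((1 : ℝ) / p) * B * max M1 M2 := by ring
end
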